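/- arXiv:1001.0034 — 12 statements merged into one kernel-verified Lean document; each statement's English description precedes it below -/
import Mathlib

section
/- Let r ≥ 1 and n ≥ 0 be integers, let q be a real number with 0 < q < 1, and let x > 0 be real. Then the series [2]_q^r · Σ_{(m_1,…,m_r) ∈ ℕ^r} (-q)^{m_1+⋯+m_r} [m_1+⋯+m_r+x]_q^n converges absolutely and equals ([2]_q^r/(1-q)^n) · Σ_{l=0}^{n} C(n,l) (-1)^l q^{l x} / (1+q^{l+1})^r, where C(n,l) is the ordinary binomial coefficient. -/
/-- The `q`-number `[y]_q = (1 - q^y)/(1 - q)`, with a real exponent (rpow). -/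
noncomputable def qnum (q y : ℝ) : ℝ := (1 - q ^ y) / (1 - q)

lemma hasSum_geom_pi (r : ℕ) {y : ℝ} (hy : |y| < 1) :
    HasSum (fun m : Fin r → ℕ => y ^ (∑ i, m i)) ((1 - y)⁻¹ ^ r) := by
  induction r with
  | zero =>
      simpa using hasSum_fintype (fun m : Fin 0 → ℕ => y ^ (∑ i, m i))
  | succ r ih =>
      have hgeo : HasSum (fun k : ℕ => y ^ k) (1 - y)⁻¹ :=
        hasSum_geometric_of_abs_lt_one hy
      have h1 : Summable fun k : ℕ => ‖y ^ k‖ := by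
        simpa using summable_geometric_of_lt_one (abs_nonneg y) hy
      have h2 : Summable fun m : Fin r → ℕ => ‖y ^ (∑ i, m i)‖ :=
        summable_norm_iff.mpr ih.summable
      have hS := summable_mul_of_summable_norm h1 h2
      have hprod : HasSum (fun z : ℕ × (Fin r → ℕ) => y ^ z.1 * y ^ (∑ i, z.2 i))
          ((1 - y)⁻¹ * (1 - y)⁻¹ ^ r) := by
        have h := hS.hasSum
        rwa [← tsum_mul_tsum_of_summable_norm h1 h2, hgeo.tsum_eq, ih.tsum_eq] at h
      have he := ((Fin.consEquiv (fun _ : Fin (r + 1) => ℕ)).hasSum_iff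
        (f := fun m : Fin (r + 1) → ℕ => y ^ (∑ i, m i))
        (a := (1 - y)⁻¹ * (1 - y)⁻¹ ^ r)).mp ?_
      · simpa [pow_succ, mul_comm] using he
      · convert hprod using 2 with z
        simp [Fin.consEquiv, Fin.sum_cons, pow_add]

theorem stmt0 (r : ℕ) (hr : 1 ≤ r) (n : ℕ) (q : ℝ) (hq0 : 0 < q) (hq1 : q < 1)
    (x : ℝ) (hx : 0 < x) :
    Summable (fun m : Fin r → ℕ =>
      (-q) ^ (∑ i, m i) * qnum q (((∑ i, m i : ℕ) : ℝ) + x) ^ n) ∧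
    (1 + q) ^ r *
        ∑' m : Fin r → ℕ, (-q) ^ (∑ i, m i) * qnum q (((∑ i, m i : ℕ) : ℝ) + x) ^ n
      = ((1 + q) ^ r / (1 - q) ^ n) *
          ∑ l ∈ Finset.range (n + 1),
            (n.choose l : ℝ) * (-1) ^ l * q ^ ((l : ℝ) * x) / (1 + q ^ (l + 1)) ^ r := by
  set c : ℕ → ℝ := fun l => (n.choose l : ℝ) * (-1) ^ l * q ^ ((l : ℝ) * x) / (1 - q) ^ n
    with hc
  -- pointwise expansion
  have key : ∀ m : Fin r → ℕ,
      (-q) ^ (∑ i, m i) * qnum q (((∑ i, m i : ℕ) : ℝ) + x) ^ n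
        = ∑ l ∈ Finset.range (n + 1), c l * (-(q ^ (l + 1))) ^ (∑ i, m i) := by
    intro m
    set S := ∑ i, m i with hS
    have hx1 : (q : ℝ) ^ ((S : ℝ) + x) = q ^ S * q ^ x := by
      rw [Real.rpow_add hq0, Real.rpow_natCast]
    have hbin : (1 - q ^ S * q ^ x) ^ n
        = ∑ l ∈ Finset.range (n + 1),
            (-(q ^ S * q ^ x)) ^ l * (n.choose l : ℝ) := by
      have h := add_pow (-(q ^ S * q ^ x)) (1 : ℝ) n
      have h2 : (1 : ℝ) - q ^ S * q ^ x = -(q ^ S * q ^ x) + 1 := by ring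
      rw [h2, h]
      simp
    have hqx : ∀ l : ℕ, (q ^ x) ^ l = q ^ ((l : ℝ) * x) := by
      intro l
      rw [← Real.rpow_natCast (q ^ x) l, ← Real.rpow_mul hq0.le, mul_comm]
    have hp : ∀ l : ℕ, (-q) ^ S * (q ^ S) ^ l = (-(q ^ (l + 1))) ^ S := by
      intro l
      rw [← pow_mul, mul_comm S l, pow_mul, ← mul_pow]
      congr 1
      ring
    rw [show qnum q ((S : ℝ) + x) = (1 - q ^ S * q ^ x) / (1 - q) by
          rw [qnum, hx1],
        div_pow, hbin, Finset.sum_div, Finset.mul_sum]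
    refine Finset.sum_congr rfl fun l _ => ?_
    rw [hc]
    have : (-(q ^ S * q ^ x)) ^ l = (-1) ^ l * (q ^ S) ^ l * q ^ ((l : ℝ) * x) := by
      rw [neg_pow, mul_pow, hqx l]; ring
    rw [this]
    field_simp
    rw [← hp l]
    ring
  -- summability of each geometric piece
  have habs : ∀ l : ℕ, |(-(q ^ (l + 1)))| < 1 := by
    intro l
    rw [abs_neg, abs_pow, abs_of_pos hq0]
    exact pow_lt_one₀ hq0.le hq1 (Nat.succ_ne_zero l)
  have hsum : ∀ l : ℕ,
      Summable (fun m : Fin r → ℕ => c l * (-(q ^ (l + 1))) ^ (∑ i, m i)) :=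
    fun l => ((hasSum_geom_pi r (habs l)).summable).mul_left (c l)
  have hSf : Summable (fun m : Fin r → ℕ =>
      (-q) ^ (∑ i, m i) * qnum q (((∑ i, m i : ℕ) : ℝ) + x) ^ n) := by
    rw [funext key]
    exact summable_sum fun l _ => hsum l
  refine ⟨hSf, ?_⟩
  have htsum : ∑' m : Fin r → ℕ,
      (-q) ^ (∑ i, m i) * qnum q (((∑ i, m i : ℕ) : ℝ) + x) ^ n
      = ∑ l ∈ Finset.range (n + 1), c l * ((1 + q ^ (l + 1))⁻¹) ^ r := by
    rw [funext key, Summable.tsum_finsetSum fun l _ => hsum l]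
    refine Finset.sum_congr rfl fun l _ => ?_
    rw [tsum_mul_left, (hasSum_geom_pi r (habs l)).tsum_eq]
    norm_num
  rw [htsum, Finset.mul_sum, Finset.mul_sum]
  refine Finset.sum_congr rfl fun l _ => ?_
  rw [hc]
  field_simp
  rw [one_div, inv_pow, inv_mul_cancel_right₀ (by positivity)]
end

section
/- Let r ≥ 1 be an integer, let q be a real number with 0 < q < 1, let x > 0 be real, and let s ∈ ℂ with Re(s) > 0. Then ∫_0^∞ t^{s-1} · ( Σ_{(m_1,…,m_r) ∈ ℕ^r} (-q)^{m_1+⋯+m_r} e^{-[m_1+⋯+m_r+x]_q · t} ) dt = Γ(s) · Σ_{(m_1,…,m_r) ∈ ℕ^r} (-q)^{m_1+⋯+m_r} [m_1+⋯+m_r+x]_q^{-s}, where t^{s-1} = exp((s-1)·log t) for t > 0, Γ is the complex Gamma function, and the integrand series converges for every t > 0. -/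
open Complex Real Set MeasureTheory

lemma qnum_pos {q y : ℝ} (hq0 : 0 < q) (hq1 : q < 1) (hy : 0 < y) : 0 < qnum q y :=
  div_pos (by linarith [Real.rpow_lt_one hq0.le hq1 hy]) (by linarith)

lemma qnum_mono {q y z : ℝ} (hq0 : 0 < q) (hq1 : q < 1) (hyz : y ≤ z) :
    qnum q y ≤ qnum q z := by
  unfold qnum
  have h := Real.rpow_le_rpow_of_exponent_ge hq0 hq1.le hyz
  exact (div_le_div_iff_of_pos_right (by linarith)).mpr (by linarith)

lemma summable_q_pow_sum (r : ℕ) {q : ℝ} (hq0 : 0 ≤ q) (hq1 : q < 1) :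
    Summable (fun m : Fin r → ℕ => q ^ (∑ i, m i)) := by
  induction r with
  | zero => exact Summable.of_finite
  | succ n ih =>
    have h := (summable_geometric_of_lt_one hq0 hq1).mul_of_nonneg ih
      (fun k => pow_nonneg hq0 _) (fun m => pow_nonneg hq0 _)
    have := ((Fin.consEquiv (fun _ => ℕ)).symm.summable_iff
      (f := fun p : ℕ × (Fin n → ℕ) => q ^ p.1 * q ^ (∑ i, p.2 i))).mpr h
    refine this.congr fun m => ?_
    simp [Fin.consEquiv, Fin.sum_univ_succ, pow_add, Fin.tail]

theorem stmt3 (r : ℕ) (hr : 1 ≤ r) (q : ℝ) (hq0 : 0 < q) (hq1 : q < 1)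
    (x : ℝ) (hx : 0 < x) (s : ℂ) (hs : 0 < s.re) :
    (∀ t : ℝ, 0 < t → Summable (fun m : Fin r → ℕ =>
      (-(q : ℂ)) ^ (∑ i, m i) *
        Complex.exp (-((qnum q (((∑ i, m i : ℕ) : ℝ) + x) * t : ℝ) : ℂ)))) ∧
    (∫ t in Set.Ioi (0 : ℝ), (t : ℂ) ^ (s - 1) *
        ∑' m : Fin r → ℕ, (-(q : ℂ)) ^ (∑ i, m i) *
          Complex.exp (-((qnum q (((∑ i, m i : ℕ) : ℝ) + x) * t : ℝ) : ℂ)))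
      = Complex.Gamma s *
          ∑' m : Fin r → ℕ, (-(q : ℂ)) ^ (∑ i, m i) *
            ((qnum q (((∑ i, m i : ℕ) : ℝ) + x) : ℝ) : ℂ) ^ (-s) := by
  set p : (Fin r → ℕ) → ℝ := fun m => qnum q (((∑ i, m i : ℕ) : ℝ) + x) with hp_def
  set a : (Fin r → ℕ) → ℂ := fun m => (-(q : ℂ)) ^ (∑ i, m i) with ha_def
  have hp_pos : ∀ m, 0 < p m := fun m => qnum_pos hq0 hq1 (lt_of_lt_of_le hx (le_add_of_nonneg_left (Nat.cast_nonneg _)))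
  have hp_lb : ∀ m, qnum q x ≤ p m := fun m => qnum_mono hq0 hq1 (le_add_of_nonneg_left (Nat.cast_nonneg _))
  have hc : 0 < qnum q x := qnum_pos hq0 hq1 hx
  have ha_norm : ∀ m, ‖a m‖ = q ^ (∑ i, m i) := by
    intro m
    simp [ha_def, norm_pow, abs_of_pos hq0]
  have hqsum := summable_q_pow_sum r hq0.le hq1
  have hexp : ∀ (m : Fin r → ℕ) (t : ℝ),
      Complex.exp (-((qnum q (((∑ i, m i : ℕ) : ℝ) + x) * t : ℝ) : ℂ))
        = (rexp (-(p m) * t) : ℂ) := by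
    intro m t
    rw [← Complex.ofReal_neg, Complex.ofReal_exp, neg_mul]
  have hsummand : ∀ t : ℝ, 0 < t → Summable (fun m : Fin r → ℕ =>
      a m * (rexp (-(p m) * t) : ℂ)) := by
    intro t ht
    apply Summable.of_norm_bounded hqsum
    intro m
    rw [norm_mul, ha_norm, Complex.norm_real, Real.norm_eq_abs, Real.abs_exp]
    calc q ^ (∑ i, m i) * rexp (-(p m) * t) ≤ q ^ (∑ i, m i) * 1 := by
          gcongr
          exact Real.exp_le_one_iff.mpr (by nlinarith [hp_pos m])
      _ = q ^ (∑ i, m i) := mul_one _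
  have heq : ∀ t : ℝ, (fun m : Fin r → ℕ => a m * (rexp (-(p m) * t) : ℂ))
      = fun m : Fin r → ℕ => (-(q : ℂ)) ^ (∑ i, m i) *
        Complex.exp (-((qnum q (((∑ i, m i : ℕ) : ℝ) + x) * t : ℝ) : ℂ)) :=
    fun t => funext fun m => by rw [hexp]
  have hsum1 : ∀ t : ℝ, 0 < t → Summable (fun m : Fin r → ℕ =>
      (-(q : ℂ)) ^ (∑ i, m i) *
        Complex.exp (-((qnum q (((∑ i, m i : ℕ) : ℝ) + x) * t : ℝ) : ℂ))) := by
    intro t ht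
    exact (heq t) ▸ hsummand t ht
  refine ⟨hsum1, ?_⟩
  have key := hasSum_mellin (a := a) (p := p) (s := s)
    (F := fun t => ∑' m : Fin r → ℕ, (-(q : ℂ)) ^ (∑ i, m i) *
          Complex.exp (-((qnum q (((∑ i, m i : ℕ) : ℝ) + x) * t : ℝ) : ℂ)))
    (fun m => Or.inr (hp_pos m)) hs
    (fun t ht => by rw [heq t]; exact (hsum1 t ht).hasSum) ?_
  · have hmellin : mellin (fun t => ∑' m : Fin r → ℕ, (-(q : ℂ)) ^ (∑ i, m i) *
          Complex.exp (-((qnum q (((∑ i, m i : ℕ) : ℝ) + x) * t : ℝ) : ℂ))) s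
        = ∫ t in Set.Ioi (0 : ℝ), (t : ℂ) ^ (s - 1) *
          ∑' m : Fin r → ℕ, (-(q : ℂ)) ^ (∑ i, m i) *
            Complex.exp (-((qnum q (((∑ i, m i : ℕ) : ℝ) + x) * t : ℝ) : ℂ)) := by
      simp [mellin, smul_eq_mul]
    rw [← hmellin, ← key.tsum_eq, ← tsum_mul_left]
    congr 1
    funext m
    rw [Complex.cpow_neg, mul_div_assoc, div_eq_mul_inv]
  · -- summability of ‖a m‖ / p m ^ s.re
    refine Summable.of_nonneg_of_le (fun m => div_nonneg (norm_nonneg _) (Real.rpow_nonneg (hp_pos m).le _)) (fun m => ?_)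
      (hqsum.div_const ((qnum q x) ^ s.re))
    rw [ha_norm]
    exact div_le_div_of_nonneg_left (pow_nonneg hq0.le _) (Real.rpow_pos_of_pos hc _)
      (Real.rpow_le_rpow hc.le (hp_lb m) hs.le)
end

section
/- Let f be an odd positive integer, let χ be a Dirichlet character modulo f with values in ℂ (extended to ℕ by χ(m) := χ(m mod f), so χ(m) = 0 when gcd(m,f) > 1), let q be a real number with 0 < q < 1, let x > 0 be real, and let n ≥ 0 be an integer. Then [2]_q · Σ_{m=0}^{∞} (-q)^m χ(m) [m+x]_q^n = ([2]_q/[2]_{q^f}) · [f]_q^n · Σ_{a=0}^{f-1} (-q)^a χ(a) · E_{n,q^f}((x+a)/f), where E_{n,Q}(y) := [2]_Q · Σ_{k=0}^{∞} (-Q)^k [k+y]_Q^n denotes the n-th q-Euler polynomial in the parameter Q = q^f. -/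
/-- The `n`-th `q`-Euler polynomial `E_{n,Q}(y) = [2]_Q · Σ_{k≥0} (-Q)^k [k+y]_Q^n`. -/
noncomputable def qEulerPoly (Q : ℝ) (n : ℕ) (y : ℝ) : ℝ :=
  (1 + Q) * ∑' k : ℕ, (-Q) ^ k * qnum Q ((k : ℝ) + y) ^ n

lemma key_qnum (f : ℕ) (hf0 : 0 < f) (q : ℝ) (hq0 : 0 < q) (hq1 : q < 1)
    (x : ℝ) (k a : ℕ) :
    qnum q ((↑(k * f + a) : ℝ) + x) = qnum q (f : ℝ) * qnum (q ^ f) ((k : ℝ) + (x + a) / f) := by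
  have hf' : (f : ℝ) ≠ 0 := Nat.cast_ne_zero.mpr hf0.ne'
  have h1q : (1 : ℝ) - q ≠ 0 := by linarith
  have hQ1 : q ^ f < 1 := pow_lt_one₀ hq0.le hq1 hf0.ne'
  have h1Q : (1 : ℝ) - q ^ f ≠ 0 := by linarith
  have h1 : q ^ (f : ℝ) = q ^ f := Real.rpow_natCast q f
  have h2 : (q ^ f : ℝ) ^ ((k : ℝ) + (x + a) / f) = q ^ ((↑(k * f + a) : ℝ) + x) := by
    rw [← h1, ← Real.rpow_mul hq0.le]
    congr 1
    push_cast
    field_simp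
    ring
  simp only [qnum, h1, h2]
  field_simp

lemma qnum_bounds (q : ℝ) (hq0 : 0 < q) (hq1 : q < 1) (y : ℝ) (hy : 0 < y) :
    0 ≤ qnum q y ∧ qnum q y ≤ 1 / (1 - q) := by
  have h1q : (0 : ℝ) < 1 - q := by linarith
  have hqy : 0 < q ^ y := Real.rpow_pos_of_pos hq0 y
  have hqy1 : q ^ y < 1 := Real.rpow_lt_one hq0.le hq1 hy
  simp only [qnum]
  constructor
  · exact div_nonneg (by linarith) h1q.le
  · rw [div_le_div_iff₀ h1q h1q]
    nlinarith

/-- Residue-class reindexing equivalence. -/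
def resEquiv (f : ℕ) [NeZero f] : ℕ ≃ Fin f × ℕ :=
  (Nat.divModEquiv f).trans (Equiv.prodComm _ _)

lemma resEquiv_symm_apply (f : ℕ) [NeZero f] (p : Fin f × ℕ) :
    (resEquiv f).symm p = p.2 * f + (p.1 : ℕ) := rfl

theorem stmt4 (f : ℕ) (hf0 : 0 < f) (hf : Odd f) (χ : DirichletCharacter ℂ f)
    (q : ℝ) (hq0 : 0 < q) (hq1 : q < 1) (x : ℝ) (hx : 0 < x) (n : ℕ) :
    (1 + (q : ℂ)) * ∑' m : ℕ, (-(q : ℂ)) ^ m * χ (m : ZMod f) *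
        ((qnum q ((m : ℝ) + x) ^ n : ℝ) : ℂ)
      = ((1 + (q : ℂ)) / (1 + (q : ℂ) ^ f)) * ((qnum q (f : ℝ) ^ n : ℝ) : ℂ) *
          ∑ a ∈ Finset.range f, (-(q : ℂ)) ^ a * χ (a : ZMod f) *
            ((qEulerPoly (q ^ f) n ((x + a) / f) : ℝ) : ℂ) := by
  haveI : NeZero f := ⟨hf0.ne'⟩
  have hQ0 : (0:ℝ) < q ^ f := pow_pos hq0 f
  have hQ1 : q ^ f < 1 := pow_lt_one₀ hq0.le hq1 hf0.ne'
  have h1Qne : (1 + (q:ℂ) ^ f) ≠ 0 := by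
    have : ((1 + q ^ f : ℝ) : ℂ) ≠ 0 := by
      exact_mod_cast Complex.ofReal_ne_zero.mpr (by positivity)
    simpa using this
  set F : ℕ → ℂ := fun m => (-(q : ℂ)) ^ m * χ (m : ZMod f) *
      ((qnum q ((m : ℝ) + x) ^ n : ℝ) : ℂ) with hFdef
  -- summability of F
  have hF : Summable F := by
    apply Summable.of_norm_bounded (g := fun m => (1 / (1 - q)) ^ n * q ^ m)
      (Summable.mul_left _ (summable_geometric_of_lt_one hq0.le hq1))
    intro m
    have hb := qnum_bounds q hq0 hq1 ((m : ℝ) + x) (by positivity)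
    have h1 : ‖(-(q : ℂ)) ^ m‖ = q ^ m := by
      rw [norm_pow, norm_neg, Complex.norm_real, Real.norm_eq_abs, abs_of_pos hq0]
    have h2 : ‖χ ((m : ℕ) : ZMod f)‖ ≤ 1 := χ.norm_le_one _
    have h3 : ‖((qnum q ((m : ℝ) + x) ^ n : ℝ) : ℂ)‖ ≤ (1 / (1 - q)) ^ n := by
      rw [Complex.norm_real, Real.norm_eq_abs, abs_of_nonneg (pow_nonneg hb.1 n)]
      exact pow_le_pow_left₀ hb.1 hb.2 n
    calc ‖F m‖ = ‖(-(q : ℂ)) ^ m‖ * ‖χ ((m : ℕ) : ZMod f)‖ *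
          ‖((qnum q ((m : ℝ) + x) ^ n : ℝ) : ℂ)‖ := by simp [hFdef, norm_mul]
      _ ≤ q ^ m * 1 * (1 / (1 - q)) ^ n := by
          rw [h1]
          gcongr
      _ = (1 / (1 - q)) ^ n * q ^ m := by ring
  -- reindex by residue classes
  -- per-term identity
  have hterm : ∀ (a : Fin f) (k : ℕ), F (k * f + (a : ℕ)) =
      ((-(q : ℂ)) ^ (a : ℕ) * χ ((a : ℕ) : ZMod f) * ((qnum q (f : ℝ) ^ n : ℝ) : ℂ)) *
        ((-((q : ℂ) ^ f)) ^ k * ((qnum (q ^ f) ((k : ℝ) + (x + a) / f) ^ n : ℝ) : ℂ)) := by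
    intro a k
    have hχ : χ (((k * f + (a : ℕ) : ℕ)) : ZMod f) = χ ((a : ℕ) : ZMod f) := by
      congr 1
      push_cast [ZMod.natCast_self]
      ring
    have hpow : (-(q : ℂ)) ^ (k * f + (a : ℕ)) =
        (-(q : ℂ)) ^ (a : ℕ) * (-((q : ℂ) ^ f)) ^ k := by
      rw [pow_add, mul_comm k f, pow_mul, ← hf.neg_pow]
      ring
    have hq : qnum q ((↑(k * f + (a : ℕ)) : ℝ) + x)
        = qnum q (f : ℝ) * qnum (q ^ f) ((k : ℝ) + (x + a) / f) :=
      key_qnum f hf0 q hq0 hq1 x k a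
    simp only [hFdef, hχ, hpow, hq, mul_pow, Complex.ofReal_mul]
    ring
  -- rewrite the Euler polynomial
  have hE : ∀ y : ℝ, ((qEulerPoly (q ^ f) n y : ℝ) : ℂ) =
      (1 + (q : ℂ) ^ f) *
        ∑' k : ℕ, (-((q : ℂ) ^ f)) ^ k * ((qnum (q ^ f) ((k : ℝ) + y) ^ n : ℝ) : ℂ) := by
    intro y
    rw [qEulerPoly, Complex.ofReal_mul, Complex.ofReal_tsum]
    push_cast
    ring_nf
    simp only [add_comm]
  -- main computation
  have hsum : ∑' m : ℕ, F m = ∑ a ∈ Finset.range f,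
      ((-(q : ℂ)) ^ a * χ ((a : ℕ) : ZMod f) * ((qnum q (f : ℝ) ^ n : ℝ) : ℂ)) *
        ∑' k : ℕ, (-((q : ℂ) ^ f)) ^ k *
          ((qnum (q ^ f) ((k : ℝ) + (x + a) / f) ^ n : ℝ) : ℂ) := by
    have h0 : ∑' m : ℕ, F m = ∑' p : Fin f × ℕ, F ((resEquiv f).symm p) := ((resEquiv f).symm.tsum_eq F).symm
    have hFs : Summable (fun p : Fin f × ℕ => F ((resEquiv f).symm p)) := hF.comp_injective (resEquiv f).symm.injective
    rw [h0, hFs.tsum_prod, tsum_fintype]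
    rw [← Fin.sum_univ_eq_sum_range (fun a => ((-(q : ℂ)) ^ a * χ ((a : ℕ) : ZMod f) *
      ((qnum q (f : ℝ) ^ n : ℝ) : ℂ)) * ∑' k : ℕ, (-((q : ℂ) ^ f)) ^ k *
        ((qnum (q ^ f) ((k : ℝ) + (x + a) / f) ^ n : ℝ) : ℂ)) f]
    refine Finset.sum_congr rfl fun a _ => ?_
    rw [← tsum_mul_left]
    refine tsum_congr fun k => ?_
    rw [resEquiv_symm_apply, hterm a k]
  rw [hsum, Finset.mul_sum, Finset.mul_sum]
  refine Finset.sum_congr rfl fun a ha => ?_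
  rw [hE ((x + a) / f)]
  generalize (∑' k : ℕ, (-((q : ℂ) ^ f)) ^ k * ((qnum (q ^ f) ((k : ℝ) + (x + (a : ℝ)) / f) ^ n : ℝ) : ℂ)) = S
  field_simp
end

section
/- Let f be an odd positive integer, let χ be a Dirichlet character modulo f with values in ℂ (extended to ℕ by χ(m) := χ(m mod f)), let r ≥ 1 and n ≥ 0 be integers, let q be a real number with 0 < q < 1, and let x > 0 be real. Then [2]_q^r · Σ_{(m_1,…,m_r) ∈ ℕ^r} (-q)^{m_1+⋯+m_r} (∏_{i=1}^r χ(m_i)) [m_1+⋯+m_r+x]_q^n = ([2]_q^r/(1-q)^n) · Σ_{l=0}^{n} C(n,l) (-1)^l q^{l x} · Σ_{(a_1,…,a_r) ∈ {0,…,f-1}^r} (∏_{j=1}^r χ(a_j)) (-q^{l+1})^{a_1+⋯+a_r} / (1+q^{(l+1)f})^r. -/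
open Finset

-- auxiliary lemmas

lemma aux_pi_tsum_prod {h : ℕ → ℂ} (hh : Summable fun m => ‖h m‖) (r : ℕ) :
    Summable (fun m : Fin r → ℕ => ‖∏ i, h (m i)‖) ∧
      (∑' m : Fin r → ℕ, ∏ i, h (m i)) = (∑' m : ℕ, h m) ^ r := by
  induction r with
  | zero =>
      constructor
      · exact Summable.of_finite
      · rw [tsum_eq_single (fun i : Fin 0 => i.elim0)
          (fun b hb => absurd (Subsingleton.elim b _) hb)]
        simp
  | succ r ih =>
      have key : ∀ p : ℕ × (Fin r → ℕ),
          (∏ i, h ((Fin.consEquiv (fun _ : Fin (r + 1) => ℕ)) p i))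
            = h p.1 * ∏ i, h (p.2 i) := by
        intro p
        rw [Fin.prod_univ_succ]
        simp [Fin.consEquiv]
      constructor
      · rw [← (Fin.consEquiv (fun _ : Fin (r + 1) => ℕ)).summable_iff]
        refine (summable_congr ?_).mpr (hh.mul_norm ih.1)
        intro p
        simp only [Function.comp_apply, key p, norm_mul]
      · rw [← (Fin.consEquiv (fun _ : Fin (r + 1) => ℕ)).tsum_eq,
          tsum_congr key, ← tsum_mul_tsum_of_summable_norm hh ih.1, ih.2, pow_succ]
        ring

lemma aux_char_summable {f : ℕ} (χ : DirichletCharacter ℂ f) {z : ℂ} (hz : ‖z‖ < 1) :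
    Summable fun m : ℕ => ‖χ (m : ZMod f) * z ^ m‖ := by
  refine Summable.of_nonneg_of_le (fun _ => norm_nonneg _) (fun m => ?_)
    (summable_geometric_of_lt_one (norm_nonneg z) hz)
  rw [norm_mul, norm_pow]
  exact mul_le_of_le_one_left (pow_nonneg (norm_nonneg z) m) (χ.norm_le_one _)

lemma aux_char_geom {f : ℕ} (hf0 : 0 < f) (χ : DirichletCharacter ℂ f) {z : ℂ} (hz : ‖z‖ < 1) :
    (∑' m : ℕ, χ (m : ZMod f) * z ^ m)
      = (∑ a : Fin f, χ ((a : ℕ) : ZMod f) * z ^ (a : ℕ)) * (1 - z ^ f)⁻¹ := by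
  haveI : NeZero f := ⟨hf0.ne'⟩
  have hzf : ‖z ^ f‖ < 1 := by
    rw [norm_pow]
    exact pow_lt_one₀ (norm_nonneg z) hz hf0.ne'
  have key : ∀ p : ℕ × Fin f,
      χ (((Nat.divModEquiv f).symm p : ℕ) : ZMod f) * z ^ ((Nat.divModEquiv f).symm p : ℕ)
        = (z ^ f) ^ p.1 * (χ ((p.2 : ℕ) : ZMod f) * z ^ (p.2 : ℕ)) := by
    intro p
    simp only [Nat.divModEquiv_symm_apply]
    have h1 : ((p.1 * f + (p.2 : ℕ) : ℕ) : ZMod f) = ((p.2 : ℕ) : ZMod f) := by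
      push_cast
      simp [ZMod.natCast_self]
    rw [h1, pow_add, pow_mul']
    ring
  calc (∑' m : ℕ, χ (m : ZMod f) * z ^ m)
      = ∑' p : ℕ × Fin f, χ (((Nat.divModEquiv f).symm p : ℕ) : ZMod f)
          * z ^ ((Nat.divModEquiv f).symm p : ℕ) := ((Nat.divModEquiv f).symm.tsum_eq _).symm
    _ = ∑' p : ℕ × Fin f, (z ^ f) ^ p.1 * (χ ((p.2 : ℕ) : ZMod f) * z ^ (p.2 : ℕ)) :=
        tsum_congr key
    _ = (∑' k : ℕ, (z ^ f) ^ k) * (∑' a : Fin f, χ ((a : ℕ) : ZMod f) * z ^ (a : ℕ)) := by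
        have h1 : Summable fun k : ℕ => ‖(z ^ f) ^ k‖ := by
          simpa using summable_geometric_of_lt_one (norm_nonneg (z ^ f)) hzf
        have h2 : Summable fun a : Fin f => ‖χ ((a : ℕ) : ZMod f) * z ^ (a : ℕ)‖ :=
          Summable.of_finite
        exact (tsum_mul_tsum_of_summable_norm h1 h2).symm
    _ = (∑ a : Fin f, χ ((a : ℕ) : ZMod f) * z ^ (a : ℕ)) * (1 - z ^ f)⁻¹ := by
        rw [tsum_geometric_of_norm_lt_one hzf, tsum_fintype]
        ring

lemma aux_qnum_pow {q : ℝ} (hq0 : 0 < q) (x : ℝ) (n S : ℕ) :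
    qnum q ((S : ℝ) + x) ^ n
      = ∑ l ∈ Finset.range (n + 1),
          (n.choose l : ℝ) * (-1) ^ l * q ^ ((l : ℝ) * x) * (q ^ l) ^ S / (1 - q) ^ n := by
  have ht : q ^ ((S : ℝ) + x) = q ^ S * q ^ x := by
    rw [Real.rpow_add hq0, Real.rpow_natCast]
  rw [qnum, div_pow, ht,
    show (1 : ℝ) - q ^ S * q ^ x = -(q ^ S * q ^ x) + 1 by ring, add_pow, Finset.sum_div]
  refine Finset.sum_congr rfl fun l hl => ?_
  have h2 : (q ^ x) ^ l = q ^ ((l : ℝ) * x) := by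
    rw [← Real.rpow_natCast (q ^ x) l, ← Real.rpow_mul hq0.le, mul_comm]
  rw [one_pow, mul_one, neg_pow, mul_pow, h2, pow_right_comm]
  ring

theorem stmt5 (f : ℕ) (hf0 : 0 < f) (hf : Odd f) (χ : DirichletCharacter ℂ f)
    (r : ℕ) (hr : 1 ≤ r) (n : ℕ) (q : ℝ) (hq0 : 0 < q) (hq1 : q < 1)
    (x : ℝ) (hx : 0 < x) :
    (1 + (q : ℂ)) ^ r * ∑' m : Fin r → ℕ,
        (-(q : ℂ)) ^ (∑ i, m i) * (∏ i, χ ((m i : ℕ) : ZMod f)) *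
          ((qnum q (((∑ i, m i : ℕ) : ℝ) + x) ^ n : ℝ) : ℂ)
      = ((1 + (q : ℂ)) ^ r / (1 - (q : ℂ)) ^ n) *
          ∑ l ∈ Finset.range (n + 1),
            (n.choose l : ℂ) * (-1) ^ l * ((q ^ ((l : ℝ) * x) : ℝ) : ℂ) *
              ∑ a : Fin r → Fin f,
                (∏ j, χ (((a j : ℕ) : ℕ) : ZMod f)) *
                  (-(q : ℂ) ^ (l + 1)) ^ (∑ j, (a j : ℕ)) /
                    (1 + (q : ℂ) ^ ((l + 1) * f)) ^ r := by
  -- notation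
  set z : ℕ → ℂ := fun l => -(q : ℂ) ^ (l + 1) with hz
  have hznorm : ∀ l, ‖z l‖ < 1 := by
    intro l
    rw [hz]
    simp only [norm_neg, norm_pow, Complex.norm_real, Real.norm_eq_abs, abs_of_pos hq0]
    exact pow_lt_one₀ hq0.le hq1 (Nat.succ_ne_zero l)
  set g : ℕ → ℕ → ℂ := fun l m => χ (m : ZMod f) * z l ^ m with hgdef
  set c : ℕ → ℂ :=
    fun l => (n.choose l : ℂ) * (-1) ^ l * ((q ^ ((l : ℝ) * x) : ℝ) : ℂ) / (1 - (q : ℂ)) ^ n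
    with hcdef
  have hg : ∀ l, Summable fun m : ℕ => ‖g l m‖ := fun l => aux_char_summable χ (hznorm l)
  -- termwise binomial expansion
  have hterm : ∀ m : Fin r → ℕ,
      (-(q : ℂ)) ^ (∑ i, m i) * (∏ i, χ ((m i : ℕ) : ZMod f)) *
          ((qnum q (((∑ i, m i : ℕ) : ℝ) + x) ^ n : ℝ) : ℂ)
        = ∑ l ∈ Finset.range (n + 1), c l * ∏ i, g l (m i) := by
    intro m
    set S : ℕ := ∑ i, m i with hS
    have hc : ((qnum q ((S : ℝ) + x) ^ n : ℝ) : ℂ)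
        = ∑ l ∈ Finset.range (n + 1),
            (n.choose l : ℂ) * (-1) ^ l * ((q ^ ((l : ℝ) * x) : ℝ) : ℂ) * ((q : ℂ) ^ l) ^ S
              / (1 - (q : ℂ)) ^ n := by
      rw [aux_qnum_pow hq0 x n S]
      push_cast
      rfl
    rw [hc, Finset.mul_sum]
    refine Finset.sum_congr rfl fun l hl => ?_
    have hprod : (∏ i, g l (m i))
        = (∏ i, χ ((m i : ℕ) : ZMod f)) * z l ^ S := by
      simp only [hgdef]
      rw [Finset.prod_mul_distrib, Finset.prod_pow_eq_pow_sum]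
    have hzS : z l ^ S = (-(q : ℂ)) ^ S * ((q : ℂ) ^ l) ^ S := by
      rw [hz, ← mul_pow]
      congr 1
      ring
    rw [hprod, hzS, hcdef]
    ring
  -- summability of each term family
  have hsum : ∀ l, Summable (fun m : Fin r → ℕ => c l * ∏ i, g l (m i)) := fun l =>
    ((aux_pi_tsum_prod (hg l) r).1.of_norm).mul_left _
  -- the inner geometric evaluation
  have hgeo : ∀ l, (∑' m : ℕ, g l m)
      = (∑ a : Fin f, χ ((a : ℕ) : ZMod f) * z l ^ (a : ℕ))
          * (1 + (q : ℂ) ^ ((l + 1) * f))⁻¹ := by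
    intro l
    have h1 : (1 : ℂ) - z l ^ f = 1 + (q : ℂ) ^ ((l + 1) * f) := by
      rw [hz]
      rw [hf.neg_pow, ← pow_mul]
      ring
    rw [hgdef]
    simpa [h1] using aux_char_geom hf0 χ (hznorm l)
  -- rewrite RHS inner sum as an r-th power
  have hrhs : ∀ l,
      (∑ a : Fin r → Fin f,
          (∏ j, χ (((a j : ℕ) : ℕ) : ZMod f)) * (-(q : ℂ) ^ (l + 1)) ^ (∑ j, (a j : ℕ)) /
            (1 + (q : ℂ) ^ ((l + 1) * f)) ^ r)
        = ((∑ a : Fin f, χ ((a : ℕ) : ZMod f) * z l ^ (a : ℕ))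
            * (1 + (q : ℂ) ^ ((l + 1) * f))⁻¹) ^ r := by
    intro l
    have hN : ∀ a : Fin r → Fin f,
        (∏ j, χ (((a j : ℕ) : ℕ) : ZMod f)) * (-(q : ℂ) ^ (l + 1)) ^ (∑ j, (a j : ℕ))
          = ∏ j, (χ ((a j : ℕ) : ZMod f) * z l ^ ((a j : ℕ))) := by
      intro a
      rw [Finset.prod_mul_distrib, Finset.prod_pow_eq_pow_sum, hz]
    calc (∑ a : Fin r → Fin f,
          (∏ j, χ (((a j : ℕ) : ℕ) : ZMod f)) * (-(q : ℂ) ^ (l + 1)) ^ (∑ j, (a j : ℕ)) /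
            (1 + (q : ℂ) ^ ((l + 1) * f)) ^ r)
        = (∑ a : Fin r → Fin f, ∏ j, (χ ((a j : ℕ) : ZMod f) * z l ^ ((a j : ℕ))))
            / (1 + (q : ℂ) ^ ((l + 1) * f)) ^ r := by
          rw [← Finset.sum_div]
          exact congrArg (· / _) (Finset.sum_congr rfl fun a _ => by rw [hN a])
      _ = (∑ a : Fin f, χ ((a : ℕ) : ZMod f) * z l ^ (a : ℕ)) ^ r
            / (1 + (q : ℂ) ^ ((l + 1) * f)) ^ r := by
          rw [Finset.sum_pow' Finset.univ (fun a : Fin f => χ ((a : ℕ) : ZMod f) * z l ^ (a : ℕ)) r,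
            Fintype.piFinset_univ]
      _ = _ := by rw [mul_pow, div_eq_mul_inv, inv_pow]
  -- main computation
  have hlhs : (∑' m : Fin r → ℕ,
        (-(q : ℂ)) ^ (∑ i, m i) * (∏ i, χ ((m i : ℕ) : ZMod f)) *
          ((qnum q (((∑ i, m i : ℕ) : ℝ) + x) ^ n : ℝ) : ℂ))
      = ∑ l ∈ Finset.range (n + 1), c l *
          ((∑ a : Fin f, χ ((a : ℕ) : ZMod f) * z l ^ (a : ℕ))
            * (1 + (q : ℂ) ^ ((l + 1) * f))⁻¹) ^ r := by
    rw [tsum_congr hterm, Summable.tsum_finsetSum (fun l _ => hsum l)]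
    refine Finset.sum_congr rfl fun l hl => ?_
    rw [tsum_mul_left, (aux_pi_tsum_prod (hg l) r).2, hgeo l]
  rw [hlhs, Finset.mul_sum, div_mul_eq_mul_div, Finset.mul_sum, Finset.sum_div]
  refine Finset.sum_congr rfl fun l hl => ?_
  rw [hrhs l, hcdef]
  ring
end

section
/- Let r ≥ 1 and n ≥ 0 be integers, let h be an integer with h ≥ r, let q be a real number with 0 < q < 1, and let x > 0 be real. Then the series Σ_{(m_1,…,m_r) ∈ ℕ^r} (-1)^{m_1+⋯+m_r} q^{Σ_{j=1}^r (h-j+1) m_j} [m_1+⋯+m_r+x]_q^n converges absolutely and equals (1/(1-q)^n) · Σ_{l=0}^{n} C(n,l) (-1)^l q^{l x} / ∏_{j=1}^{r} (1+q^{h-j+l+1}). -/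
set_option maxHeartbeats 1000000
set_option maxRecDepth 8000

lemma pi_tsum_prod : ∀ (r : ℕ) (f : Fin r → ℕ → ℝ),
    (∀ j, Summable fun m => |f j m|) →
    Summable (fun m : Fin r → ℕ => |∏ j, f j (m j)|) ∧
    (∑' m : Fin r → ℕ, ∏ j, f j (m j)) = ∏ j, ∑' m, f j m := by
  intro r
  induction r with
  | zero =>
    intro f _
    constructor
    · exact Summable.of_finite
    · simp [tsum_fintype]
  | succ r ih =>
    intro f hf
    obtain ⟨h1, h2⟩ := ih (fun j => f j.succ) (fun j => hf j.succ)
    set e := Fin.consEquiv (fun _ : Fin (r+1) => ℕ) with he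
    have key : ∀ p : ℕ × (Fin r → ℕ),
        (∏ j, f j (e p j)) = f 0 p.1 * ∏ j, f j.succ (p.2 j) := by
      intro p
      rw [Fin.prod_univ_succ]
      simp [he, Fin.consEquiv]
    have hn0 : Summable fun m : ℕ => ‖f 0 m‖ := by simpa only [Real.norm_eq_abs] using hf 0
    have hn1 : Summable fun m : Fin r → ℕ => ‖∏ j, f j.succ (m j)‖ := by
      simpa only [Real.norm_eq_abs] using h1
    have hs : Summable (fun p : ℕ × (Fin r → ℕ) => ‖f 0 p.1 * ∏ j, f j.succ (p.2 j)‖) :=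
      by apply Summable.mul_norm hn0 hn1
    constructor
    · have h3 : Summable (fun p : ℕ × (Fin r → ℕ) => ‖∏ j, f j (e p j)‖) := by
        apply hs.congr; intro p; rw [key p]
      have h4 := h3.comp_injective e.symm.injective
      apply h4.congr
      intro m
      simp only [Function.comp, Real.norm_eq_abs]
      rw [e.apply_symm_apply]
    · rw [← e.tsum_eq, tsum_congr key,
        ← tsum_mul_tsum_of_summable_norm hn0 hn1, Fin.prod_univ_succ, h2]

theorem stmt6 (r : ℕ) (hr : 1 ≤ r) (n : ℕ) (h : ℤ) (hh : (r : ℤ) ≤ h)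
    (q : ℝ) (hq0 : 0 < q) (hq1 : q < 1) (x : ℝ) (hx : 0 < x) :
    Summable (fun m : Fin r → ℕ =>
      (-1 : ℝ) ^ (∑ j, m j) *
        q ^ (∑ j : Fin r, (h - ((j : ℤ) + 1) + 1) * (m j : ℤ)) *
          qnum q (((∑ j, m j : ℕ) : ℝ) + x) ^ n) ∧
    (∑' m : Fin r → ℕ,
        (-1 : ℝ) ^ (∑ j, m j) *
          q ^ (∑ j : Fin r, (h - ((j : ℤ) + 1) + 1) * (m j : ℤ)) *
            qnum q (((∑ j, m j : ℕ) : ℝ) + x) ^ n)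
      = (1 / (1 - q) ^ n) *
          ∑ l ∈ Finset.range (n + 1),
            (n.choose l : ℝ) * (-1) ^ l * q ^ ((l : ℝ) * x) /
              ∏ j : Fin r, (1 + q ^ (h - ((j : ℤ) + 1) + l + 1)) := by
  have hqne : q ≠ 0 := hq0.ne'
  -- geometric ratios
  set k : ℕ → Fin r → ℤ := fun l j => h - ((j : ℤ) + 1) + (l : ℤ) + 1 with hk_def
  set a : ℕ → Fin r → ℝ := fun l j => q ^ (k l j) with ha_def
  set c : ℕ → ℝ := fun l =>
    (1 / (1 - q) ^ n) * (n.choose l : ℝ) * (-1) ^ l * q ^ ((l : ℝ) * x) with hc_def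
  set u : ℕ → Fin r → ℕ → ℝ := fun l j m => (-(a l j)) ^ m with hu_def
  have hk_pos : ∀ l (j : Fin r), 1 ≤ k l j := by
    intro l j
    have hj : (j : ℤ) < r := by exact_mod_cast j.isLt
    simp only [hk_def]
    omega
  have ha_pos : ∀ l j, 0 < a l j := fun l j => zpow_pos hq0 _
  have ha_lt1 : ∀ l j, a l j < 1 := by
    intro l j
    have h1 : a l j = q ^ (k l j).toNat := by
      rw [ha_def, ← zpow_natCast, Int.toNat_of_nonneg (by linarith [hk_pos l j])]
    rw [h1]
    exact pow_lt_one₀ hq0.le hq1 (by have := hk_pos l j; omega)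
  have hu_abs : ∀ l j, Summable fun m => |u l j m| := by
    intro l j
    have : (fun m => |u l j m|) = fun m => (a l j) ^ m := by
      funext m
      rw [hu_def]; simp [abs_pow, abs_of_pos (ha_pos l j)]
    rw [this]
    exact summable_geometric_of_lt_one (ha_pos l j).le (ha_lt1 l j)
  have hu_tsum : ∀ l j, (∑' m : ℕ, u l j m) = (1 + a l j)⁻¹ := by
    intro l j
    have hnorm : ‖-(a l j)‖ < 1 := by
      rw [norm_neg, Real.norm_eq_abs, abs_of_pos (ha_pos l j)]; exact ha_lt1 l j
    simp only [hu_def]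
    rw [tsum_geometric_of_norm_lt_one hnorm, sub_neg_eq_add]
  have hprod := fun l => pi_tsum_prod r (fun j => u l j) (hu_abs l)
  have hsum : ∀ l, Summable (fun m : Fin r → ℕ => c l * ∏ j, u l j (m j)) :=
    fun l => ((hprod l).1.of_abs).mul_left _
  -- the pointwise binomial expansion
  have claimA : ∀ m : Fin r → ℕ,
      (-1 : ℝ) ^ (∑ j, m j) *
        q ^ (∑ j : Fin r, (h - ((j : ℤ) + 1) + 1) * (m j : ℤ)) *
          qnum q (((∑ j, m j : ℕ) : ℝ) + x) ^ n
      = ∑ l ∈ Finset.range (n + 1), c l * ∏ j, u l j (m j) := by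
    intro m
    set s : ℕ := ∑ j, m j with hs_def
    set E : ℤ := ∑ j : Fin r, (h - ((j : ℤ) + 1) + 1) * (m j : ℤ) with hE_def
    set T : ℝ := q ^ ((s : ℝ) + x) with hT_def
    have hqnum : qnum q ((s : ℝ) + x) ^ n = (1 / (1 - q) ^ n) * (1 - T) ^ n := by
      rw [qnum, div_pow]; ring
    have hbinom : (1 - T) ^ n = ∑ l ∈ Finset.range (n + 1), (-T) ^ l * (n.choose l : ℝ) := by
      rw [show (1 - T) = (-T + 1) by ring, add_pow]
      simp
    rw [hqnum, hbinom, Finset.mul_sum, Finset.mul_sum]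
    refine Finset.sum_congr rfl fun l _ => ?_
    -- per-term identity
    have hprod_u : ∏ j, u l j (m j) = (-1) ^ s * ∏ j, (a l j) ^ (m j) := by
      simp only [hu_def]
      have hterm : ∀ j ∈ Finset.univ, (-(a l j)) ^ (m j) = (-1 : ℝ) ^ (m j) * (a l j) ^ (m j) :=
        fun j _ => neg_pow _ _
      rw [Finset.prod_congr rfl hterm, Finset.prod_mul_distrib, Finset.prod_pow_eq_pow_sum]
    -- exponent identity via rpow
    have hrpow : (q : ℝ) ^ ((E : ℝ)) * q ^ (((s : ℝ) + x) * (l : ℝ))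
        = q ^ ((l : ℝ) * x) * ∏ j, (a l j) ^ (m j) := by
      have hprod_a : ∏ j, (a l j) ^ (m j)
          = q ^ (∑ j : Fin r, ((k l j : ℝ) * (m j : ℝ))) := by
        rw [Real.rpow_sum_of_pos hq0]
        refine Finset.prod_congr rfl fun j _ => ?_
        simp only [ha_def]
        rw [← Real.rpow_intCast q (k l j), ← Real.rpow_natCast _ (m j),
          ← Real.rpow_mul hq0.le]
      rw [hprod_a, ← Real.rpow_add hq0, ← Real.rpow_add hq0]
      congr 1
      have hE' : (E : ℝ) = ∑ j : Fin r, ((h : ℝ) - ((j : ℕ) : ℝ)) * (m j : ℝ) := by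
        rw [hE_def]
        push_cast
        refine Finset.sum_congr rfl fun j _ => by ring
      have hs' : (s : ℝ) = ∑ j : Fin r, (m j : ℝ) := by rw [hs_def]; push_cast; ring
      have hk' : ∑ j : Fin r, ((k l j : ℝ) * (m j : ℝ))
          = ∑ j : Fin r, (((h : ℝ) - ((j : ℕ) : ℝ) + (l : ℝ)) * (m j : ℝ)) := by
        refine Finset.sum_congr rfl fun j _ => ?_
        simp only [hk_def]
        push_cast
        ring
      have hsplit : ∑ j : Fin r, (((h : ℝ) - ((j : ℕ) : ℝ) + (l : ℝ)) * (m j : ℝ))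
          = (∑ j : Fin r, ((h : ℝ) - ((j : ℕ) : ℝ)) * (m j : ℝ))
            + (∑ j : Fin r, (m j : ℝ)) * (l : ℝ) := by
        rw [Finset.sum_mul, ← Finset.sum_add_distrib]
        exact Finset.sum_congr rfl fun j _ => by ring
      rw [hE', hs', hk', hsplit]
      ring
    have hT_pow : (-T) ^ l = (-1) ^ l * q ^ (((s : ℝ) + x) * (l : ℝ)) := by
      rw [neg_pow, hT_def, ← Real.rpow_natCast (q ^ ((s:ℝ)+x)) l, ← Real.rpow_mul hq0.le]
    have hqE : q ^ E = q ^ ((E : ℝ)) := (Real.rpow_intCast q E).symm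
    rw [hprod_u, hc_def, hT_pow, hqE]
    calc (-1:ℝ) ^ s * q ^ ((E:ℝ)) * (1 / (1 - q) ^ n * ((-1) ^ l * q ^ (((s:ℝ) + x) * (l:ℝ)) * (n.choose l : ℝ)))
        = (1 / (1 - q) ^ n * (n.choose l : ℝ) * (-1) ^ l) *
            ((-1) ^ s * (q ^ ((E:ℝ)) * q ^ (((s:ℝ) + x) * (l:ℝ)))) := by ring
      _ = (1 / (1 - q) ^ n * (n.choose l : ℝ) * (-1) ^ l) *
            ((-1) ^ s * (q ^ ((l:ℝ) * x) * ∏ j, (a l j) ^ (m j))) := by rw [hrpow]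
      _ = 1 / (1 - q) ^ n * (n.choose l : ℝ) * (-1) ^ l * q ^ ((l:ℝ) * x) *
            ((-1) ^ s * ∏ j, (a l j) ^ (m j)) := by ring
  constructor
  · exact (summable_sum (fun l _ => hsum l)).congr fun m => (claimA m).symm
  · rw [tsum_congr claimA, Summable.tsum_finsetSum (fun l _ => hsum l), Finset.mul_sum]
    refine Finset.sum_congr rfl fun l _ => ?_
    rw [tsum_mul_left, (hprod l).2]
    have : ∀ j : Fin r, (∑' m : ℕ, u l j m) = (1 + a l j)⁻¹ := hu_tsum l
    rw [Finset.prod_congr rfl (fun j _ => this j), Finset.prod_inv_distrib]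
    rw [hc_def, ha_def, div_eq_mul_inv]
    ring
end

section
/- Let r ≥ 1 and n ≥ 0 be integers, let h be an integer with h ≥ r, let q be a real number with 0 < q < 1, and let x > 0 be real. Then Σ_{(m_1,…,m_r) ∈ ℕ^r} (-1)^{m_1+⋯+m_r} q^{Σ_{j=1}^r (h-j+1) m_j} [m_1+⋯+m_r+x]_q^n = Σ_{m=0}^{∞} binom_q(m+r-1, m) · (-q^{h-r+1})^m [m+x]_q^n, where binom_q(m+r-1, m) := ∏_{i=1}^{m} (1-q^{r-1+i})/(1-q^i) is the Gaussian (q-binomial) coefficient, and both series converge absolutely. -/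
/-- The Gaussian (q-binomial) coefficient
`binom_q(m + r - 1, m) = ∏_{i=1}^{m} (1 - q^{r-1+i}) / (1 - q^i)`. -/
noncomputable def gaussBinom (q : ℝ) (r m : ℕ) : ℝ :=
  ∏ i ∈ Finset.range m, (1 - q ^ (r - 1 + (i + 1))) / (1 - q ^ (i + 1))

open Finset

section Aux

variable {q : ℝ}

private lemma hne_aux (hq0 : 0 < q) (hq1 : q < 1) (i : ℕ) : (1 : ℝ) - q ^ (i + 1) ≠ 0 :=
  ne_of_gt (sub_pos.2 (pow_lt_one₀ hq0.le hq1 i.succ_ne_zero))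

/-- q-Pascal recurrence. -/
private lemma gauss_pascal (hq0 : 0 < q) (hq1 : q < 1) {r : ℕ} (hr : 1 ≤ r) (k : ℕ) :
    gaussBinom q (r + 1) (k + 1) = gaussBinom q r (k + 1) + q ^ r * gaussBinom q (r + 1) k := by
  have hne := hne_aux hq0 hq1
  set A : ℝ := ∏ i ∈ range k, (1 - q ^ (r + (i + 1))) with hA
  set B : ℝ := ∏ i ∈ range k, (1 - q ^ (i + 1)) with hB
  have hBne : B ≠ 0 := Finset.prod_ne_zero_iff.2 fun i _ => hne i
  have hkne : (1 : ℝ) - q ^ (k + 1) ≠ 0 := hne k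
  have e1 : gaussBinom q (r + 1) (k + 1) = (A * (1 - q ^ (r + (k + 1)))) / (B * (1 - q ^ (k + 1))) := by
    rw [gaussBinom, prod_div_distrib, prod_range_succ, prod_range_succ]
    simp only [Nat.add_sub_cancel]
    rfl
  have e3 : gaussBinom q (r + 1) k = A / B := by
    rw [gaussBinom, prod_div_distrib]
    simp only [Nat.add_sub_cancel]
    rfl
  have e2 : gaussBinom q r (k + 1) = (A * (1 - q ^ r)) / (B * (1 - q ^ (k + 1))) := by
    have hnum : ∏ i ∈ range (k + 1), (1 - q ^ (r - 1 + (i + 1))) = A * (1 - q ^ r) := by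
      rw [prod_range_succ']
      congr 1
      · refine Finset.prod_congr rfl fun i _ => ?_
        have : r - 1 + (i + 1 + 1) = r + (i + 1) := by omega
        rw [this]
      · have : r - 1 + (0 + 1) = r := by omega
        rw [this]
    rw [gaussBinom, prod_div_distrib, hnum, prod_range_succ]
  rw [e1, e2, e3]
  have hq : q ^ (r + (k + 1)) = q ^ r * q ^ (k + 1) := by rw [pow_add]
  field_simp
  rw [hq]; ring
end Aux

section Aux2
variable {q : ℝ}

private lemma gauss_conv (hq0 : 0 < q) (hq1 : q < 1) {r : ℕ} (hr : 1 ≤ r) (k : ℕ) :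
    ∑ p ∈ antidiagonal k, q ^ (r * p.1) * gaussBinom q r p.2 = gaussBinom q (r + 1) k := by
  induction k with
  | zero => simp [gaussBinom]
  | succ k ih =>
    rw [Finset.Nat.sum_antidiagonal_succ]
    have hterm : ∀ p : ℕ × ℕ, q ^ (r * (p.1 + 1)) * gaussBinom q r p.2
        = q ^ r * (q ^ (r * p.1) * gaussBinom q r p.2) := by
      intro p
      rw [Nat.mul_succ, pow_add]
      ring
    rw [Finset.sum_congr rfl fun p _ => hterm p, ← Finset.mul_sum, ih,
      gauss_pascal hq0 hq1 hr k]
    simp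

private lemma key_sum (hq0 : 0 < q) (hq1 : q < 1) :
    ∀ r : ℕ, 1 ≤ r → ∀ k : ℕ,
      ∑ m ∈ Finset.Nat.antidiagonalTuple r k, ∏ j : Fin r, q ^ ((r - 1 - (j : ℕ)) * m j)
        = gaussBinom q r k := by
  intro r
  induction r with
  | zero => omega
  | succ r ih =>
    intro _ k
    rcases Nat.eq_zero_or_pos r with rfl | hr
    · -- r + 1 = 1
      rw [Finset.Nat.antidiagonalTuple_one, Finset.sum_singleton]
      have h1 : ∀ j : Fin 1, q ^ ((1 - 1 - (j : ℕ)) * (![k] : Fin 1 → ℕ) j) = 1 := by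
        intro j
        simp [Nat.sub_sub]
      rw [Finset.prod_congr rfl fun j _ => h1 j, Finset.prod_const_one]
      rw [gaussBinom]
      rw [Finset.prod_congr rfl fun i (_ : i ∈ range k) =>
        show (1 - q ^ (1 - 1 + (i + 1))) / (1 - q ^ (i + 1)) = 1 by
          simp [div_self (hne_aux hq0 hq1 i)]]
      simp
    · -- inductive step
      have hsum : ∑ m ∈ Finset.Nat.antidiagonalTuple (r + 1) k,
            ∏ j : Fin (r + 1), q ^ ((r + 1 - 1 - (j : ℕ)) * m j)
          = ∑ p ∈ antidiagonal k, q ^ (r * p.1) *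
              ∑ m ∈ Finset.Nat.antidiagonalTuple r p.2,
                ∏ j : Fin r, q ^ ((r - 1 - (j : ℕ)) * m j) := by
        simp_rw [Finset.mul_sum]
        rw [Finset.sum_sigma']
        refine (Finset.sum_nbij' (fun (x : Fin (r + 1) → ℕ) => (⟨(x 0, ∑ i : Fin r, x i.succ), fun i => x i.succ⟩ :
            (p : ℕ × ℕ) × (Fin r → ℕ)))
          (fun x => Fin.cons x.1.1 x.2) ?_ ?_ ?_ ?_ ?_)
        · intro m hm
          rw [Finset.Nat.mem_antidiagonalTuple] at hm
          refine Finset.mem_sigma.2 ⟨?_, ?_⟩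
          · rw [Finset.HasAntidiagonal.mem_antidiagonal]
            rw [← hm, Fin.sum_univ_succ]
          · exact Finset.Nat.mem_antidiagonalTuple.2 rfl
        · intro x hx
          rw [Finset.mem_sigma, Finset.HasAntidiagonal.mem_antidiagonal, Finset.Nat.mem_antidiagonalTuple] at hx
          rw [Finset.Nat.mem_antidiagonalTuple, Fin.sum_cons, hx.2, hx.1]
        · intro m hm
          funext j
          refine Fin.cases ?_ ?_ j
          · rfl
          · intro i; rfl
        · intro x hx
          rw [Finset.mem_sigma, Finset.HasAntidiagonal.mem_antidiagonal, Finset.Nat.mem_antidiagonalTuple] at hx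
          have h0 : (Fin.cons x.1.1 x.2 : Fin (r + 1) → ℕ) 0 = x.1.1 := rfl
          have hs : ∑ i : Fin r, (Fin.cons x.1.1 x.2 : Fin (r + 1) → ℕ) i.succ = x.1.2 := by
            simp [hx.2]
          ext <;> simp [h0, hs, hx.2]
        · intro m hm
          dsimp only
          rw [Fin.prod_univ_succ]
          have h0 : (r + 1 - 1 - ((0 : Fin (r + 1)) : ℕ)) * m 0 = r * m 0 := by simp
          rw [h0]
          congr 1
          refine Finset.prod_congr rfl fun i _ => ?_
          have hv : ((i.succ : Fin (r + 1)) : ℕ) = (i : ℕ) + 1 := rfl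
          have he : r + 1 - 1 - ((i.succ : Fin (r + 1)) : ℕ) = r - 1 - (i : ℕ) := by
            rw [hv]; omega
          rw [he]
      rw [hsum]
      rw [Finset.sum_congr rfl fun p _ => by rw [ih hr p.2]]
      exact gauss_conv hq0 hq1 hr k
end Aux2

section Aux3
variable {q : ℝ}

private lemma summable_pi_geom (hq0 : 0 < q) (hq1 : q < 1) :
    ∀ r : ℕ, Summable (fun m : Fin r → ℕ => ∏ j, q ^ (m j)) := by
  intro r
  induction r with
  | zero =>
    exact Summable.of_finite
  | succ r ih =>
    rw [← (Fin.consEquiv (fun _ : Fin (r + 1) => ℕ)).summable_iff]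
    have heq : ((fun m : Fin (r + 1) → ℕ => ∏ j, q ^ (m j)) ∘ (Fin.consEquiv (fun _ : Fin (r + 1) => ℕ)))
        = fun p : ℕ × (Fin r → ℕ) => q ^ p.1 * ∏ j, q ^ (p.2 j) := by
      funext p
      simp only [Function.comp_apply, Fin.consEquiv_apply]
      rw [Fin.prod_univ_succ]
      simp [Fin.cons_zero, Fin.cons_succ]
    exact (Summable.mul_of_nonneg (summable_geometric_of_lt_one hq0.le hq1) ih
      (fun i => pow_nonneg hq0.le i)
      (fun m => Finset.prod_nonneg fun j _ => pow_nonneg hq0.le _)).congr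
      (fun p => (congrFun heq p).symm)
end Aux3

section Main
variable {q : ℝ}

private lemma main_aux (hq0 : 0 < q) (hq1 : q < 1) {r : ℕ} (hr : 1 ≤ r)
    (n : ℕ) {x : ℝ} (hx : 0 < x) {c : ℝ} (hc0 : 0 < c) (hcq : c ≤ q) :
    Summable (fun m : Fin r → ℕ =>
      (-c) ^ (∑ j, m j) * (∏ j : Fin r, q ^ ((r - 1 - (j : ℕ)) * m j)) *
        qnum q (((∑ j, m j : ℕ) : ℝ) + x) ^ n) ∧
    Summable (fun k : ℕ => gaussBinom q r k * (-c) ^ k * qnum q ((k : ℝ) + x) ^ n) ∧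
    (∑' m : Fin r → ℕ,
        (-c) ^ (∑ j, m j) * (∏ j : Fin r, q ^ ((r - 1 - (j : ℕ)) * m j)) *
          qnum q (((∑ j, m j : ℕ) : ℝ) + x) ^ n)
      = ∑' k : ℕ, gaussBinom q r k * (-c) ^ k * qnum q ((k : ℝ) + x) ^ n := by
  have h1q : (0 : ℝ) < 1 - q := by linarith
  have hf0 : ∀ k : ℕ, 0 ≤ qnum q ((k : ℝ) + x) := by
    intro k
    have hy : (0 : ℝ) ≤ (k : ℝ) + x := by positivity
    have h2 : q ^ ((k : ℝ) + x) ≤ 1 := Real.rpow_le_one hq0.le hq1.le hy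
    exact div_nonneg (by linarith) h1q.le
  have hfD : ∀ k : ℕ, qnum q ((k : ℝ) + x) ≤ 1 / (1 - q) := by
    intro k
    have h2 : (0 : ℝ) ≤ q ^ ((k : ℝ) + x) := Real.rpow_nonneg hq0.le _
    exact (div_le_div_iff_of_pos_right h1q).mpr (by linarith)
  set G := fun m : Fin r → ℕ =>
      (-c) ^ (∑ j, m j) * (∏ j : Fin r, q ^ ((r - 1 - (j : ℕ)) * m j)) *
        qnum q (((∑ j, m j : ℕ) : ℝ) + x) ^ n with hGdef
  have hWnn : ∀ m : Fin r → ℕ, (0:ℝ) ≤ ∏ j : Fin r, q ^ ((r - 1 - (j : ℕ)) * m j) :=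
    fun m => Finset.prod_nonneg fun j _ => pow_nonneg hq0.le _
  have hW1 : ∀ m : Fin r → ℕ, (∏ j : Fin r, q ^ ((r - 1 - (j : ℕ)) * m j)) ≤ 1 :=
    fun m => Finset.prod_le_one (fun j _ => pow_nonneg hq0.le _)
      (fun j _ => pow_le_one₀ hq0.le hq1.le)
  have habs : ∀ m : Fin r → ℕ, |G m| ≤ (1 / (1 - q)) ^ n * ∏ j, q ^ (m j) := by
    intro m
    rw [hGdef]
    dsimp only
    rw [abs_mul, abs_mul, abs_pow, abs_neg, abs_of_pos hc0, abs_of_nonneg (hWnn m),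
      abs_of_nonneg (pow_nonneg (hf0 _) n)]
    calc c ^ (∑ j, m j) * (∏ j : Fin r, q ^ ((r - 1 - (j : ℕ)) * m j)) *
          qnum q (((∑ j, m j : ℕ) : ℝ) + x) ^ n
        ≤ q ^ (∑ j, m j) * 1 * (1 / (1 - q)) ^ n := by
          refine mul_le_mul (mul_le_mul (pow_le_pow_left₀ hc0.le hcq _) (hW1 m) (hWnn m)
            (pow_nonneg hq0.le _)) (pow_le_pow_left₀ (hf0 _) (hfD _) n)
            (pow_nonneg (hf0 _) n) ?_
          positivity
      _ = (1 / (1 - q)) ^ n * ∏ j, q ^ (m j) := by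
          rw [← Finset.prod_pow_eq_pow_sum]
          ring
  have h1 : Summable (fun m : Fin r → ℕ => (1 / (1 - q)) ^ n * ∏ j, q ^ (m j)) :=
    (summable_pi_geom hq0 hq1 r).mul_left _
  have hGsum : Summable G :=
    (Summable.of_nonneg_of_le (fun m => abs_nonneg _) habs h1).of_abs
  -- fiber sums
  have hval : ∀ k : ℕ, ∑ m ∈ Finset.Nat.antidiagonalTuple r k, G m
      = gaussBinom q r k * (-c) ^ k * qnum q ((k : ℝ) + x) ^ n := by
    intro k
    have hterm : ∀ m ∈ Finset.Nat.antidiagonalTuple r k,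
        G m = ((-c) ^ k * qnum q ((k : ℝ) + x) ^ n) * ∏ j : Fin r, q ^ ((r - 1 - (j : ℕ)) * m j) := by
      intro m hm
      have hk : ∑ i, m i = k := Finset.Nat.mem_antidiagonalTuple.mp hm
      rw [hGdef]
      dsimp only
      rw [hk]
      ring
    rw [Finset.sum_congr rfl hterm, ← Finset.mul_sum, key_sum hq0 hq1 r hr k]
    ring
  have hGe : Summable (G ∘ (Finset.Nat.sigmaAntidiagonalTupleEquivTuple r)) :=
    (Equiv.summable_iff _).2 hGsum
  have hfib : ∀ k : ℕ, Summable fun cc : (Finset.Nat.antidiagonalTuple r k) =>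
      (G ∘ (Finset.Nat.sigmaAntidiagonalTupleEquivTuple r)) ⟨k, cc⟩ :=
    fun k => Summable.of_finite
  have hfibsum : ∀ k : ℕ, ∑' cc : (Finset.Nat.antidiagonalTuple r k),
      (G ∘ (Finset.Nat.sigmaAntidiagonalTupleEquivTuple r)) ⟨k, cc⟩
      = gaussBinom q r k * (-c) ^ k * qnum q ((k : ℝ) + x) ^ n := by
    intro k
    have : ∀ cc : (Finset.Nat.antidiagonalTuple r k),
        (G ∘ (Finset.Nat.sigmaAntidiagonalTupleEquivTuple r)) ⟨k, cc⟩ = G cc := fun cc => rfl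
    rw [tsum_congr this, Finset.tsum_subtype (Finset.Nat.antidiagonalTuple r k) G, hval k]
  have hsig : Summable fun k : ℕ => ∑' cc : (Finset.Nat.antidiagonalTuple r k),
      (G ∘ (Finset.Nat.sigmaAntidiagonalTupleEquivTuple r)) ⟨k, cc⟩ := hGe.sigma
  refine ⟨hGsum, hsig.congr hfibsum, ?_⟩
  calc ∑' m : Fin r → ℕ, G m
      = ∑' p, (G ∘ (Finset.Nat.sigmaAntidiagonalTupleEquivTuple r)) p :=
        ((Finset.Nat.sigmaAntidiagonalTupleEquivTuple r).tsum_eq G).symm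
    _ = ∑' (k : ℕ) (cc : (Finset.Nat.antidiagonalTuple r k)),
          (G ∘ (Finset.Nat.sigmaAntidiagonalTupleEquivTuple r)) ⟨k, cc⟩ :=
        Summable.tsum_sigma' hfib hGe
    _ = ∑' k : ℕ, gaussBinom q r k * (-c) ^ k * qnum q ((k : ℝ) + x) ^ n :=
        tsum_congr hfibsum
end Main

theorem stmt7 (r : ℕ) (hr : 1 ≤ r) (n : ℕ) (h : ℤ) (hh : (r : ℤ) ≤ h)
    (q : ℝ) (hq0 : 0 < q) (hq1 : q < 1) (x : ℝ) (hx : 0 < x) :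
    Summable (fun m : Fin r → ℕ =>
      (-1 : ℝ) ^ (∑ j, m j) *
        q ^ (∑ j : Fin r, (h - ((j : ℤ) + 1) + 1) * (m j : ℤ)) *
          qnum q (((∑ j, m j : ℕ) : ℝ) + x) ^ n) ∧
    Summable (fun m : ℕ =>
      gaussBinom q r m * (-(q ^ (h - r + 1 : ℤ))) ^ m * qnum q ((m : ℝ) + x) ^ n) ∧
    (∑' m : Fin r → ℕ,
        (-1 : ℝ) ^ (∑ j, m j) *
          q ^ (∑ j : Fin r, (h - ((j : ℤ) + 1) + 1) * (m j : ℤ)) *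
            qnum q (((∑ j, m j : ℕ) : ℝ) + x) ^ n)
      = ∑' m : ℕ,
          gaussBinom q r m * (-(q ^ (h - r + 1 : ℤ))) ^ m * qnum q ((m : ℝ) + x) ^ n := by
  have h1 : (1 : ℤ) ≤ h - r + 1 := by omega
  have hc0 : (0 : ℝ) < q ^ (h - r + 1 : ℤ) := zpow_pos hq0 _
  have hcq : q ^ (h - r + 1 : ℤ) ≤ q := by
    calc q ^ (h - r + 1 : ℤ) ≤ q ^ (1 : ℤ) :=
          zpow_le_zpow_right_of_le_one₀ hq0 hq1.le h1
      _ = q := zpow_one q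
  obtain ⟨S1, S2, SE⟩ := main_aux hq0 hq1 hr n hx hc0 hcq
  have hFeq : ∀ m : Fin r → ℕ,
      (-1 : ℝ) ^ (∑ j, m j) *
        q ^ (∑ j : Fin r, (h - ((j : ℤ) + 1) + 1) * (m j : ℤ)) *
          qnum q (((∑ j, m j : ℕ) : ℝ) + x) ^ n
      = (-(q ^ (h - r + 1 : ℤ))) ^ (∑ j, m j) * (∏ j : Fin r, q ^ ((r - 1 - (j : ℕ)) * m j)) *
          qnum q (((∑ j, m j : ℕ) : ℝ) + x) ^ n := by
    intro m
    have hexp : (∑ j : Fin r, (h - ((j : ℤ) + 1) + 1) * (m j : ℤ))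
        = (h - r + 1) * ((∑ j, m j : ℕ) : ℤ)
          + ((∑ j : Fin r, (r - 1 - (j : ℕ)) * m j : ℕ) : ℤ) := by
      push_cast
      rw [Finset.mul_sum, ← Finset.sum_add_distrib]
      refine Finset.sum_congr rfl fun j _ => ?_
      have hj : (j : ℕ) < r := j.isLt
      have hcast : (((r - 1 - (j : ℕ)) : ℕ) : ℤ) = (r : ℤ) - 1 - ((j : ℕ) : ℤ) := by omega
      rw [hcast]
      ring
    rw [hexp, zpow_add₀ (ne_of_gt hq0), zpow_mul, zpow_natCast, zpow_natCast,
      Finset.prod_pow_eq_pow_sum]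
    ring
  refine ⟨S1.congr (fun m => (hFeq m).symm), S2, ?_⟩
  rw [tsum_congr hFeq]
  exact SE
end

section
/- Let f be an odd positive integer, let χ be a Dirichlet character modulo f with values in ℂ (extended to ℕ by χ(m) := χ(m mod f)), let r ≥ 1 and n ≥ 0 be integers, let h be an integer with h ≥ r, let q be a real number with 0 < q < 1, and let x > 0 be real. Then [2]_q^r · Σ_{(m_1,…,m_r) ∈ ℕ^r} (-1)^{m_1+⋯+m_r} q^{Σ_{j=1}^r (h-j+1) m_j} (∏_{j=1}^r χ(m_j)) [m_1+⋯+m_r+x]_q^n = ([2]_q^r/[2]_{q^f}^r) · [f]_q^n · Σ_{(a_1,…,a_r) ∈ {0,…,f-1}^r} (-1)^{a_1+⋯+a_r} (∏_{j=1}^r χ(a_j)) q^{Σ_{j=1}^r (h-j+1) a_j} · Z(n, (x+a_1+⋯+a_r)/f), where Z(n,y) := [2]_{q^f}^r · Σ_{(k_1,…,k_r) ∈ ℕ^r} (-1)^{k_1+⋯+k_r} (q^f)^{Σ_{j=1}^r (h-j+1) k_j} [k_1+⋯+k_r+y]_{q^f}^n. -/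
/-- `Z(n, y) = ζ^{(h)}_{q^f, r}(-n, y)
  = [2]_{q^f}^r · Σ_{k ∈ ℕ^r} (-1)^{|k|} (q^f)^{Σ_j (h-j+1) k_j} [|k| + y]_{q^f}^n`. -/
noncomputable def Zfun (q : ℝ) (f r : ℕ) (h : ℤ) (n : ℕ) (y : ℝ) : ℝ :=
  (1 + q ^ f) ^ r * ∑' k : Fin r → ℕ,
    (-1 : ℝ) ^ (∑ j, k j) *
      (q ^ f) ^ (∑ j : Fin r, (h - ((j : ℤ) + 1) + 1) * (k j : ℤ)) *
        qnum (q ^ f) (((∑ j, k j : ℕ) : ℝ) + y) ^ n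

lemma aux_summable_pow (Q : ℝ) (hQ0 : 0 ≤ Q) (hQ1 : Q < 1) (r : ℕ) :
    Summable (fun m : Fin r → ℕ => Q ^ (∑ j, m j)) := by
  induction r with
  | zero => exact Summable.of_finite
  | succ r ih =>
    have h1 : Summable fun m : ℕ => Q ^ m := summable_geometric_of_lt_one hQ0 hQ1
    have h2 := h1.mul_of_nonneg ih (fun _ => pow_nonneg hQ0 _) (fun _ => pow_nonneg hQ0 _)
    have h3 := (Fin.consEquiv fun _ => ℕ).symm.summable_iff.mpr h2
    refine h3.congr fun m => ?_
    simp [Function.comp, Fin.insertNthEquiv, Fin.sum_univ_succ, pow_add, Fin.removeNth, Fin.succAbove]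
    exact Or.inl rfl

lemma qnum_nonneg {Q t : ℝ} (hQ0 : 0 < Q) (hQ1 : Q < 1) (ht : 0 ≤ t) : 0 ≤ qnum Q t := by
  have h1 : Q ^ t ≤ 1 := Real.rpow_le_one hQ0.le hQ1.le ht
  have h2 : (0:ℝ) < 1 - Q := by linarith
  exact div_nonneg (by linarith) h2.le

lemma qnum_le {Q t : ℝ} (hQ0 : 0 < Q) (hQ1 : Q < 1) : qnum Q t ≤ (1 - Q)⁻¹ := by
  have h1 : 0 < Q ^ t := Real.rpow_pos_of_pos hQ0 t
  have h2 : (0:ℝ) < 1 - Q := by linarith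
  rw [qnum, div_le_iff₀ h2, inv_mul_cancel₀ h2.ne']
  linarith

lemma qnum_mul_nat {Q : ℝ} (hQ0 : 0 < Q) (hQ1 : Q < 1) (f : ℕ) (hf : 0 < f) (y : ℝ) :
    qnum Q ((f : ℝ) * y) = qnum Q (f : ℝ) * qnum (Q ^ f) y := by
  have h1 : Q ^ (f:ℝ) = Q ^ f := Real.rpow_natCast Q f
  have h2 : (Q ^ f : ℝ) ^ y = Q ^ ((f:ℝ) * y) := by
    rw [← h1, ← Real.rpow_mul hQ0.le]
  have hqf1 : Q ^ f < 1 := pow_lt_one₀ hQ0.le hQ1 hf.ne'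
  have hne : 1 - Q ^ f ≠ 0 := by linarith
  have hne2 : 1 - Q ≠ 0 := by linarith
  rw [qnum, qnum, qnum, h1, h2]
  field_simp

theorem stmt9 (f : ℕ) (hf0 : 0 < f) (hf : Odd f) (χ : DirichletCharacter ℂ f)
    (r : ℕ) (hr : 1 ≤ r) (n : ℕ) (h : ℤ) (hh : (r : ℤ) ≤ h)
    (q : ℝ) (hq0 : 0 < q) (hq1 : q < 1) (x : ℝ) (hx : 0 < x) :
    (1 + (q : ℂ)) ^ r * ∑' m : Fin r → ℕ,
        (-1 : ℂ) ^ (∑ j, m j) *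
          ((q ^ (∑ j : Fin r, (h - ((j : ℤ) + 1) + 1) * (m j : ℤ)) : ℝ) : ℂ) *
            (∏ j, χ ((m j : ℕ) : ZMod f)) *
              ((qnum q (((∑ j, m j : ℕ) : ℝ) + x) ^ n : ℝ) : ℂ)
      = ((1 + (q : ℂ)) ^ r / (1 + (q : ℂ) ^ f) ^ r) * ((qnum q (f : ℝ) ^ n : ℝ) : ℂ) *
          ∑ a : Fin r → Fin f,
            (-1 : ℂ) ^ (∑ j, (a j : ℕ)) * (∏ j, χ (((a j : ℕ) : ℕ) : ZMod f)) *
              ((q ^ (∑ j : Fin r, (h - ((j : ℤ) + 1) + 1) * ((a j : ℕ) : ℤ)) : ℝ) : ℂ) *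
                ((Zfun q f r h n ((x + ∑ j, ((a j : ℕ) : ℝ)) / f) : ℝ) : ℂ) := by
  haveI : NeZero f := ⟨hf0.ne'⟩
  have hq1' : (0:ℝ) < 1 - q := by linarith
  have hqf0 : (0:ℝ) < q ^ f := pow_pos hq0 f
  have hqf1 : q ^ f < 1 := pow_lt_one₀ hq0.le hq1 hf0.ne'
  set F : (Fin r → ℕ) → ℂ := fun m =>
    (-1 : ℂ) ^ (∑ j, m j) *
      ((q ^ (∑ j : Fin r, (h - ((j : ℤ) + 1) + 1) * (m j : ℤ)) : ℝ) : ℂ) *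
        (∏ j, χ ((m j : ℕ) : ZMod f)) *
          ((qnum q (((∑ j, m j : ℕ) : ℝ) + x) ^ n : ℝ) : ℂ) with hFdef
  -- coefficient bound
  have hcoef : ∀ j : Fin r, (1:ℤ) ≤ h - ((j:ℤ)+1) + 1 := by
    intro j
    have h2 : ((j:ℕ) : ℤ) < (r:ℤ) := by exact_mod_cast j.isLt
    omega
  -- summability
  have hnorm : ∀ m : Fin r → ℕ, ‖F m‖ ≤ ((1 - q)⁻¹) ^ n * q ^ (∑ j, m j) := by
    intro m
    have hE : ((∑ j, m j : ℕ) : ℤ) ≤ ∑ j : Fin r, (h - ((j : ℤ) + 1) + 1) * (m j : ℤ) := by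
      rw [Nat.cast_sum]
      refine Finset.sum_le_sum fun j _ => ?_
      exact le_mul_of_one_le_left (Int.natCast_nonneg _) (hcoef j)
    have e5 : q ^ (∑ j : Fin r, (h - ((j : ℤ) + 1) + 1) * (m j : ℤ)) ≤ q ^ (∑ j, m j) := by
      calc q ^ (∑ j : Fin r, (h - ((j : ℤ) + 1) + 1) * (m j : ℤ))
          ≤ q ^ ((∑ j, m j : ℕ) : ℤ) := zpow_le_zpow_right_of_le_one₀ hq0 hq1.le hE
        _ = q ^ (∑ j, m j) := zpow_natCast q _
    have e2 : ‖((q ^ (∑ j : Fin r, (h - ((j : ℤ) + 1) + 1) * (m j : ℤ)) : ℝ) : ℂ)‖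
        = q ^ (∑ j : Fin r, (h - ((j : ℤ) + 1) + 1) * (m j : ℤ)) := by
      rw [Complex.norm_real, Real.norm_eq_abs, abs_of_pos (zpow_pos hq0 _)]
    have e3 : ‖∏ j, χ ((m j : ℕ) : ZMod f)‖ ≤ 1 := by
      rw [norm_prod]
      exact Finset.prod_le_one (fun _ _ => norm_nonneg _) (fun j _ => χ.norm_le_one _)
    have e4 : ‖((qnum q (((∑ j, m j : ℕ) : ℝ) + x) ^ n : ℝ) : ℂ)‖ ≤ ((1 - q)⁻¹) ^ n := by
      rw [Complex.norm_real, Real.norm_eq_abs, abs_of_nonneg (pow_nonneg (qnum_nonneg hq0 hq1 (by positivity)) n)]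
      exact pow_le_pow_left₀ (qnum_nonneg hq0 hq1 (by positivity)) (qnum_le hq0 hq1) n
    rw [hFdef]
    calc ‖(-1 : ℂ) ^ (∑ j, m j) *
      ((q ^ (∑ j : Fin r, (h - ((j : ℤ) + 1) + 1) * (m j : ℤ)) : ℝ) : ℂ) *
        (∏ j, χ ((m j : ℕ) : ZMod f)) *
          ((qnum q (((∑ j, m j : ℕ) : ℝ) + x) ^ n : ℝ) : ℂ)‖
        = 1 * q ^ (∑ j : Fin r, (h - ((j : ℤ) + 1) + 1) * (m j : ℤ)) *
            ‖∏ j, χ ((m j : ℕ) : ZMod f)‖ *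
            ‖((qnum q (((∑ j, m j : ℕ) : ℝ) + x) ^ n : ℝ) : ℂ)‖ := by
          rw [norm_mul, norm_mul, norm_mul, e2]; simp
      _ ≤ 1 * q ^ (∑ j, m j) * 1 * ((1 - q)⁻¹) ^ n := by
          gcongr
      _ = ((1 - q)⁻¹) ^ n * q ^ (∑ j, m j) := by ring
  have hFsum : Summable F :=
    Summable.of_norm_bounded ((aux_summable_pow q hq0.le hq1 r).mul_left _) hnorm
  -- the equivalence
  let e : (Fin r → Fin f) × (Fin r → ℕ) ≃ (Fin r → ℕ) :=
    (Equiv.prodComm _ _).trans ((Equiv.arrowProdEquivProdArrow (Fin r) (fun _ => ℕ) (fun _ => Fin f)).symm.trans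
      (Equiv.piCongrRight fun _ => (Nat.divModEquiv f).symm))
  have he : ∀ (a : Fin r → Fin f) (k : Fin r → ℕ) (j : Fin r),
      e (a, k) j = k j * f + (a j : ℕ) := fun a k j => rfl
  have hFe : Summable (F ∘ e) := e.summable_iff.mpr hFsum
  have step1 : ∑' m, F m = ∑ a : Fin r → Fin f, ∑' k : Fin r → ℕ, F (e (a, k)) := by
    rw [← e.tsum_eq F]
    rw [Summable.tsum_prod' (f := fun p : (Fin r → Fin f) × (Fin r → ℕ) => F (e p)) hFe
      (fun a => hFe.comp_injective (Prod.mk_right_injective a))]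
    exact tsum_fintype _
  have key : ∀ a : Fin r → Fin f,
      (∑' k : Fin r → ℕ, F (e (a, k))) =
        ((-1 : ℂ) ^ (∑ j, (a j : ℕ)) * (∏ j, χ (((a j : ℕ) : ℕ) : ZMod f)) *
          ((q ^ (∑ j : Fin r, (h - ((j : ℤ) + 1) + 1) * ((a j : ℕ) : ℤ)) : ℝ) : ℂ) *
          ((qnum q (f : ℝ) ^ n : ℝ) : ℂ)) *
          ((Zfun q f r h n ((x + ∑ j, ((a j : ℕ) : ℝ)) / f) / (1 + q ^ f) ^ r : ℝ) : ℂ) := by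
    intro a
    set y : ℝ := (x + ∑ j, ((a j : ℕ) : ℝ)) / f with hy
    set t : (Fin r → ℕ) → ℝ := fun k =>
      (-1 : ℝ) ^ (∑ j, k j) * (q ^ f) ^ (∑ j : Fin r, (h - ((j : ℤ) + 1) + 1) * (k j : ℤ)) *
        qnum (q ^ f) (((∑ j, k j : ℕ) : ℝ) + y) ^ n with ht
    have hZ : Zfun q f r h n y = (1 + q ^ f) ^ r * ∑' k, t k := rfl
    have hpt : ∀ k : Fin r → ℕ, F (e (a, k)) =
        ((-1 : ℂ) ^ (∑ j, (a j : ℕ)) * (∏ j, χ (((a j : ℕ) : ℕ) : ZMod f)) *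
          ((q ^ (∑ j : Fin r, (h - ((j : ℤ) + 1) + 1) * ((a j : ℕ) : ℤ)) : ℝ) : ℂ) *
          ((qnum q (f : ℝ) ^ n : ℝ) : ℂ)) * ((t k : ℝ) : ℂ) := by
      intro k
      have hsum : (∑ j, (k j * f + (a j : ℕ))) = (∑ j, k j) * f + ∑ j, (a j : ℕ) := by
        rw [Finset.sum_add_distrib, ← Finset.sum_mul]
      have hexp : (∑ j : Fin r, (h - ((j : ℤ) + 1) + 1) * ((k j * f + (a j : ℕ) : ℕ) : ℤ))
          = (f : ℤ) * (∑ j : Fin r, (h - ((j : ℤ) + 1) + 1) * (k j : ℤ))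
            + ∑ j : Fin r, (h - ((j : ℤ) + 1) + 1) * ((a j : ℕ) : ℤ) := by
        rw [Finset.mul_sum, ← Finset.sum_add_distrib]
        refine Finset.sum_congr rfl fun j _ => ?_
        push_cast
        ring
      have hchi : ∀ j : Fin r, χ (((k j * f + (a j : ℕ) : ℕ)) : ZMod f)
          = χ (((a j : ℕ) : ℕ) : ZMod f) := by
        intro j
        congr 1
        push_cast [ZMod.natCast_self]
        ring
      have harg : ((((∑ j, k j) * f + ∑ j, (a j : ℕ) : ℕ)) : ℝ) + x
          = (f : ℝ) * (((∑ j, k j : ℕ) : ℝ) + y) := by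
        rw [hy]
        push_cast
        field_simp
        ring
      have hqsplit : (q : ℝ) ^ ((f : ℤ) * (∑ j : Fin r, (h - ((j : ℤ) + 1) + 1) * (k j : ℤ))
            + ∑ j : Fin r, (h - ((j : ℤ) + 1) + 1) * ((a j : ℕ) : ℤ))
          = (q ^ f) ^ (∑ j : Fin r, (h - ((j : ℤ) + 1) + 1) * (k j : ℤ))
            * q ^ (∑ j : Fin r, (h - ((j : ℤ) + 1) + 1) * ((a j : ℕ) : ℤ)) := by
        rw [zpow_add₀ hq0.ne', ← zpow_natCast q f, ← zpow_mul]
      have hsign : (-1 : ℂ) ^ ((∑ j, k j) * f + ∑ j, (a j : ℕ))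
          = (-1 : ℂ) ^ (∑ j, k j) * (-1 : ℂ) ^ (∑ j, (a j : ℕ)) := by
        rw [pow_add, pow_mul', hf.neg_one_pow]
      rw [hFdef, ht]
      simp only [he]
      rw [hsum, hexp, hsign, hqsplit, harg, qnum_mul_nat hq0 hq1 f hf0, mul_pow]
      simp only [hchi]
      push_cast [Complex.ofReal_zpow]
      ring
    rw [tsum_congr hpt, tsum_mul_left, ← Complex.ofReal_tsum]
    congr 1
    rw [hZ, mul_div_cancel_left₀ _ (by positivity : ((1:ℝ) + q ^ f) ^ r ≠ 0)]
  rw [step1, Finset.sum_congr rfl fun a _ => key a, Finset.mul_sum, Finset.mul_sum]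
  refine Finset.sum_congr rfl fun a _ => ?_
  push_cast [Complex.ofReal_div]
  ring
end

section
/- Let f be an odd positive integer, let χ be a Dirichlet character modulo f with values in ℂ (extended to ℕ by χ(m) := χ(m mod f)), let r ≥ 1 and n ≥ 0 be integers, let h be an integer with h ≥ r, let q be a real number with 0 < q < 1, and let x > 0 be real. Then [2]_q^r · Σ_{(m_1,…,m_r) ∈ ℕ^r} (-1)^{m_1+⋯+m_r} q^{Σ_{j=1}^r (h-j+1) m_j} (∏_{j=1}^r χ(m_j)) [m_1+⋯+m_r+x]_q^n = ([2]_q^r/(1-q)^n) · Σ_{(a_1,…,a_r) ∈ {0,…,f-1}^r} (-1)^{a_1+⋯+a_r} (∏_{j=1}^r χ(a_j)) · Σ_{l=0}^{n} C(n,l) (-1)^l q^{l x} q^{Σ_{j=1}^r (h-j+l+1) a_j} / ∏_{j=1}^{r} (1+q^{(h-j+l+1) f}). -/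
set_option maxHeartbeats 1000000

lemma summable_pi_prod : ∀ (r : ℕ) (g : Fin r → ℕ → ℂ), (∀ j, Summable fun m => ‖g j m‖) →
    Summable (fun m : Fin r → ℕ => ‖∏ j, g j (m j)‖) := by
  intro r
  induction r with
  | zero => intro g hg; exact .of_finite
  | succ r ih =>
    intro g hg
    rw [← (Fin.consEquiv fun _ : Fin (r+1) => ℕ).summable_iff]
    have key := Summable.mul_of_nonneg (f := fun m : ℕ => ‖g 0 m‖)
      (g := fun v : Fin r → ℕ => ‖∏ j : Fin r, g j.succ (v j)‖) (hg 0)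
      (ih (fun j => g j.succ) (fun j => hg j.succ))
      (fun _ => norm_nonneg _) (fun _ => norm_nonneg _)
    refine key.congr fun p => ?_
    simp only [Function.comp_apply, Fin.consEquiv_apply, Fin.prod_univ_succ,
      Fin.cons_zero, Fin.cons_succ, norm_mul]

lemma summable_pi_prod' (r : ℕ) (g : Fin r → ℕ → ℂ) (hg : ∀ j, Summable fun m => ‖g j m‖) :
    Summable (fun m : Fin r → ℕ => ∏ j, g j (m j)) :=
  (summable_pi_prod r g hg).of_norm

lemma tsum_pi_prod : ∀ (r : ℕ) (g : Fin r → ℕ → ℂ), (∀ j, Summable fun m => ‖g j m‖) →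
    ∑' m : Fin r → ℕ, ∏ j, g j (m j) = ∏ j, ∑' m, g j m := by
  intro r
  induction r with
  | zero =>
    intro g hg
    rw [Finset.univ_eq_empty, Finset.prod_empty]
    rw [tsum_eq_single (fun i => i.elim0) (fun b hb => absurd (funext fun i => i.elim0) hb)]
    simp
  | succ r ih =>
    intro g hg
    rw [← (Fin.consEquiv fun _ : Fin (r+1) => ℕ).tsum_eq]
    have step : ∑' (p : ℕ × (Fin r → ℕ)), ∏ j, g j ((Fin.consEquiv fun _ : Fin (r+1) => ℕ) p j)
        = ∑' (p : ℕ × (Fin r → ℕ)), g 0 p.1 * ∏ j : Fin r, g j.succ (p.2 j) :=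
      tsum_congr fun p => by simp [Fin.prod_univ_succ]
    have key := tsum_mul_tsum_of_summable_norm (f := fun m : ℕ => g 0 m)
      (g := fun v : Fin r → ℕ => ∏ j : Fin r, g j.succ (v j)) (hg 0)
      (summable_pi_prod r _ (fun j => hg j.succ))
    rw [step, ← key, Fin.prod_univ_succ, ih (fun j => g j.succ) (fun j => hg j.succ)]

lemma char_summable (f : ℕ) (χ : DirichletCharacter ℂ f)
    (q : ℝ) (hq0 : 0 < q) (hq1 : q < 1) (c : ℕ) (hc : 1 ≤ c) :
    Summable fun m : ℕ => ‖(-1:ℂ)^m * χ (m : ZMod f) * (q:ℂ)^(c*m)‖ := by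
  refine Summable.of_nonneg_of_le (fun _ => norm_nonneg _) (fun m => ?_)
    (summable_geometric_of_lt_one hq0.le hq1)
  have h1 : ‖(-1:ℂ)^m * χ (m : ZMod f) * (q:ℂ)^(c*m)‖
      = ‖(-1:ℂ)^m‖ * ‖χ (m : ZMod f)‖ * ‖(q:ℂ)^(c*m)‖ := by
    rw [norm_mul, norm_mul]
  rw [h1]
  have h2 : ‖(-1:ℂ)^m‖ = 1 := by simp
  have h3 : ‖(q:ℂ)^(c*m)‖ = q^(c*m) := by
    rw [norm_pow, Complex.norm_real, Real.norm_of_nonneg hq0.le]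
  rw [h2, h3, one_mul]
  calc ‖χ (m : ZMod f)‖ * q ^ (c * m) ≤ 1 * q ^ (c * m) := by
        exact mul_le_mul_of_nonneg_right (χ.norm_le_one _) (by positivity)
    _ = q ^ (c * m) := one_mul _
    _ ≤ q ^ m := pow_le_pow_of_le_one hq0.le hq1.le (Nat.le_mul_of_pos_left m (by omega))

lemma char_sum (f : ℕ) (hf0 : 0 < f) (hf : Odd f) (χ : DirichletCharacter ℂ f)
    (q : ℝ) (hq0 : 0 < q) (hq1 : q < 1) (c : ℕ) (hc : 1 ≤ c) :
    ∑' m : ℕ, (-1:ℂ)^m * χ (m : ZMod f) * (q:ℂ)^(c*m)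
      = (∑ a : Fin f, (-1:ℂ)^(a:ℕ) * χ ((a:ℕ) : ZMod f) * (q:ℂ)^(c*(a:ℕ)))
          / (1 + (q:ℂ)^(c*f)) := by
  haveI : NeZero f := ⟨hf0.ne'⟩
  set F : ℕ → ℂ := fun m => (-1:ℂ)^m * χ (m : ZMod f) * (q:ℂ)^(c*m) with hF
  have hsum : Summable F := (char_summable f χ q hq0 hq1 c hc).of_norm
  set e : Fin f × ℕ ≃ ℕ :=
    (Equiv.prodComm (Fin f) ℕ).trans (Nat.divModEquiv f).symm with he
  have he' : ∀ p : Fin f × ℕ, e p = p.2 * f + (p.1 : ℕ) := fun p => rfl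
  have hz : ‖-((q:ℂ)^(c*f))‖ < 1 := by
    rw [norm_neg, norm_pow, Complex.norm_real, Real.norm_of_nonneg hq0.le]
    exact pow_lt_one₀ hq0.le hq1 (by positivity)
  have hzsum : ∑' k : ℕ, (-((q:ℂ)^(c*f)))^k = (1 + (q:ℂ)^(c*f))⁻¹ := by
    rw [tsum_geometric_of_norm_lt_one hz, sub_neg_eq_add]
  have key : ∀ (a : Fin f) (k : ℕ),
      F (k * f + (a : ℕ)) = ((-1:ℂ)^(a:ℕ) * χ ((a:ℕ) : ZMod f) * (q:ℂ)^(c*(a:ℕ)))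
        * (-((q:ℂ)^(c*f)))^k := by
    intro a k
    have hχ : ((↑(k * f + (a : ℕ)) : ZMod f)) = ((a : ℕ) : ZMod f) := by
      push_cast
      simp [ZMod.natCast_self]
    rw [hF]
    simp only [hχ]
    have h1 : (-1:ℂ)^(k * f + (a:ℕ)) = (-1:ℂ)^(a:ℕ) * (-1:ℂ)^k := by
      rw [pow_add, mul_comm k f, pow_mul, hf.neg_one_pow]
      ring_nf
    have h2 : (q:ℂ)^(c*(k * f + (a:ℕ))) = (q:ℂ)^(c*(a:ℕ)) * ((q:ℂ)^(c*f))^k := by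
      rw [← pow_mul, ← pow_add]
      ring_nf
    rw [h1, h2, neg_pow]
    ring
  have hse : Summable fun p : Fin f × ℕ => F (e p) := (e.summable_iff (f := F)).mpr hsum
  have hfib : ∀ a : Fin f, Summable fun k : ℕ => F (e (a, k)) := by
    intro a
    have hs2 : Summable fun k : ℕ => ((-1:ℂ)^(a:ℕ) * χ ((a:ℕ) : ZMod f)
        * (q:ℂ)^(c*(a:ℕ))) * (-((q:ℂ)^(c*f)))^k :=
      (summable_geometric_of_norm_lt_one hz).mul_left _
    exact hs2.congr fun k => by rw [he' (a,k), key a k]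
  rw [← e.tsum_eq F, Summable.tsum_prod' hse hfib, tsum_fintype]
  have : ∀ a : Fin f, ∑' k : ℕ, F (e (a, k))
      = ((-1:ℂ)^(a:ℕ) * χ ((a:ℕ) : ZMod f) * (q:ℂ)^(c*(a:ℕ))) * (1 + (q:ℂ)^(c*f))⁻¹ := by
    intro a
    calc ∑' k : ℕ, F (e (a, k)) = ∑' k : ℕ, ((-1:ℂ)^(a:ℕ) * χ ((a:ℕ) : ZMod f)
          * (q:ℂ)^(c*(a:ℕ))) * (-((q:ℂ)^(c*f)))^k := by
          refine tsum_congr fun k => ?_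
          rw [he' (a, k), key a k]
      _ = _ := by rw [tsum_mul_left, hzsum]
  rw [Finset.sum_congr rfl fun a _ => this a]
  rw [← Finset.sum_mul, div_eq_mul_inv]

lemma one_sub_pow_expand {R : Type*} [CommRing R] (t : R) (n : ℕ) :
    (1 - t)^n = ∑ l ∈ Finset.range (n+1), (n.choose l : R) * (-1)^l * t^l := by
  rw [sub_eq_add_neg, add_comm, add_pow]
  refine Finset.sum_congr rfl fun l _ => ?_
  rw [neg_pow]
  ring

lemma qnum_expand (q : ℝ) (hq0 : 0 < q) (n N : ℕ) (x : ℝ) :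
    qnum q ((N:ℝ) + x) ^ n = (∑ l ∈ Finset.range (n+1),
      (n.choose l : ℝ) * (-1)^l * q^((l:ℝ)*x) * (q^N)^l) / (1-q)^n := by
  rw [qnum, div_pow]
  congr 1
  rw [Real.rpow_add hq0, Real.rpow_natCast, one_sub_pow_expand]
  refine Finset.sum_congr rfl fun l _ => ?_
  rw [mul_pow]
  rw [← Real.rpow_natCast (q ^ x) l, ← Real.rpow_mul hq0.le, mul_comm x (l:ℝ)]
  ring

theorem stmt11 (f : ℕ) (hf0 : 0 < f) (hf : Odd f) (χ : DirichletCharacter ℂ f)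
    (r : ℕ) (hr : 1 ≤ r) (n : ℕ) (h : ℤ) (hh : (r : ℤ) ≤ h)
    (q : ℝ) (hq0 : 0 < q) (hq1 : q < 1) (x : ℝ) (hx : 0 < x) :
    (1 + (q : ℂ)) ^ r * ∑' m : Fin r → ℕ,
        (-1 : ℂ) ^ (∑ j, m j) *
          ((q ^ (∑ j : Fin r, (h - ((j : ℤ) + 1) + 1) * (m j : ℤ)) : ℝ) : ℂ) *
            (∏ j, χ ((m j : ℕ) : ZMod f)) *
              ((qnum q (((∑ j, m j : ℕ) : ℝ) + x) ^ n : ℝ) : ℂ)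
      = ((1 + (q : ℂ)) ^ r / (1 - (q : ℂ)) ^ n) *
          ∑ a : Fin r → Fin f,
            (-1 : ℂ) ^ (∑ j, (a j : ℕ)) * (∏ j, χ (((a j : ℕ) : ℕ) : ZMod f)) *
              ∑ l ∈ Finset.range (n + 1),
                (n.choose l : ℂ) * (-1) ^ l * ((q ^ ((l : ℝ) * x) : ℝ) : ℂ) *
                  ((q ^ (∑ j : Fin r, (h - ((j : ℤ) + 1) + l + 1) * ((a j : ℕ) : ℤ)) : ℝ) : ℂ) /
                    ∏ j : Fin r, (1 + ((q ^ ((h - ((j : ℤ) + 1) + l + 1) * f) : ℝ) : ℂ)) := by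
  -- exponents as naturals
  set d : Fin r → ℕ → ℕ := fun j l => (h - ((j:ℤ)+1) + l + 1).toNat with hd
  have hjr : ∀ j : Fin r, ((j:ℕ) : ℤ) + 1 ≤ h := by
    intro j
    have : ((j:ℕ) : ℤ) + 1 ≤ (r : ℤ) := by exact_mod_cast j.2
    omega
  have hdz : ∀ (j : Fin r) (l : ℕ), ((d j l : ℕ) : ℤ) = h - ((j:ℤ)+1) + l + 1 := by
    intro j l
    have := hjr j
    simp only [hd]
    have hl : (0:ℤ) ≤ l := Int.natCast_nonneg l
    omega
  have hd1 : ∀ (j : Fin r) (l : ℕ), 1 ≤ d j l := by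
    intro j l
    have h1 := hdz j l
    have h2 := hjr j
    have hl : (0:ℤ) ≤ l := Int.natCast_nonneg l
    omega
  have hdl : ∀ (j : Fin r) (l : ℕ), d j l = d j 0 + l := by
    intro j l
    have h1 := hdz j l
    have h2 := hdz j 0
    omega
  set g : ℕ → Fin r → ℕ → ℂ :=
    fun l j m => (-1:ℂ)^m * χ (m : ZMod f) * (q:ℂ)^(d j l * m) with hgdef
  have hgnorm : ∀ l (j : Fin r), Summable fun m => ‖g l j m‖ :=
    fun l j => char_summable f χ q hq0 hq1 (d j l) (hd1 j l)
  set K : ℕ → ℂ :=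
    fun l => (n.choose l : ℂ) * (-1)^l * ((q ^ ((l:ℝ)*x) : ℝ) : ℂ) / (1 - (q:ℂ))^n with hK
  -- the product identity
  have hprod : ∀ (l : ℕ) (m : Fin r → ℕ), ∏ j, g l j (m j)
      = (-1:ℂ)^(∑ j, m j) * (∏ j, χ ((m j : ℕ) : ZMod f))
        * ((q:ℂ)^(∑ j, d j 0 * m j) * ((q:ℂ)^(∑ j, m j))^l) := by
    intro l m
    simp only [hgdef]
    rw [Finset.prod_mul_distrib, Finset.prod_mul_distrib]
    rw [Finset.prod_pow_eq_pow_sum, Finset.prod_pow_eq_pow_sum]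
    congr 1
    rw [← pow_mul, ← pow_add]
    congr 1
    rw [Finset.sum_mul]
    rw [← Finset.sum_add_distrib]
    refine Finset.sum_congr rfl fun j _ => ?_
    rw [hdl j l]
    ring
  -- pointwise expansion of the LHS summand
  have point : ∀ m : Fin r → ℕ,
      (-1 : ℂ) ^ (∑ j, m j) *
          ((q ^ (∑ j : Fin r, (h - ((j : ℤ) + 1) + 1) * (m j : ℤ)) : ℝ) : ℂ) *
            (∏ j, χ ((m j : ℕ) : ZMod f)) *
              ((qnum q (((∑ j, m j : ℕ) : ℝ) + x) ^ n : ℝ) : ℂ)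
        = ∑ l ∈ Finset.range (n+1), K l * ∏ j, g l j (m j) := by
    intro m
    have hcast1 : ((q ^ (∑ j : Fin r, (h - ((j : ℤ) + 1) + 1) * (m j : ℤ)) : ℝ) : ℂ)
        = (q:ℂ)^(∑ j, d j 0 * m j) := by
      have he : (∑ j : Fin r, (h - ((j : ℤ) + 1) + 1) * (m j : ℤ))
          = ((∑ j, d j 0 * m j : ℕ) : ℤ) := by
        push_cast
        refine Finset.sum_congr rfl fun j _ => ?_
        have hji : ((d j 0 : ℕ) : ℤ) = h - ((j:ℤ)+1) + 1 := by
          rw [hdz j 0]; push_cast; ring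
        rw [← hji]
      rw [he, zpow_natCast]
      push_cast
      ring
    have hq2 : ((qnum q (((∑ j, m j : ℕ) : ℝ) + x) ^ n : ℝ) : ℂ)
        = (∑ l ∈ Finset.range (n+1), (n.choose l : ℂ) * (-1:ℂ)^l
            * ((q ^ ((l:ℝ)*x) : ℝ) : ℂ) * ((q:ℂ)^(∑ j, m j))^l) / (1 - (q:ℂ))^n := by
      rw [qnum_expand q hq0 n (∑ j, m j) x]
      push_cast
      ring
    rw [hcast1, hq2]
    have hre : ∑ l ∈ Finset.range (n+1), K l * ∏ j, g l j (m j)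
        = ∑ l ∈ Finset.range (n+1),
            ((-1:ℂ)^(∑ j, m j) * (∏ j, χ ((m j : ℕ) : ZMod f)) * (q:ℂ)^(∑ j, d j 0 * m j))
              * ((n.choose l : ℂ) * (-1:ℂ)^l * ((q ^ ((l:ℝ)*x) : ℝ) : ℂ)
                  * ((q:ℂ)^(∑ j, m j))^l) / (1 - (q:ℂ))^n :=
      Finset.sum_congr rfl fun l _ => by rw [hprod l m, hK]; ring
    rw [hre, ← Finset.sum_div, ← Finset.mul_sum]
    ring
  rw [tsum_congr point]
  have hsummand : ∀ l ∈ Finset.range (n+1),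
      Summable (fun m : Fin r → ℕ => K l * ∏ j, g l j (m j)) :=
    fun l _ => (summable_pi_prod' r (g l) (hgnorm l)).mul_left (K l)
  rw [Summable.tsum_finsetSum hsummand]
  have hstep : ∀ l ∈ Finset.range (n+1),
      ∑' m : Fin r → ℕ, K l * ∏ j, g l j (m j)
        = K l * ((∑ a : Fin r → Fin f, ∏ j, (-1:ℂ)^((a j : ℕ)) * χ (((a j : ℕ)) : ZMod f)
            * (q:ℂ)^(d j l * (a j : ℕ)))
          / ∏ j : Fin r, (1 + (q:ℂ)^(d j l * f))) := by
    intro l _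
    rw [tsum_mul_left, tsum_pi_prod r (g l) (hgnorm l)]
    congr 1
    have : ∀ j : Fin r, ∑' m : ℕ, g l j m
        = (∑ a : Fin f, (-1:ℂ)^(a:ℕ) * χ ((a:ℕ) : ZMod f) * (q:ℂ)^(d j l * (a:ℕ)))
            / (1 + (q:ℂ)^(d j l * f)) := by
      intro j
      exact char_sum f hf0 hf χ q hq0 hq1 (d j l) (hd1 j l)
    rw [Finset.prod_congr rfl fun j _ => this j, Finset.prod_div_distrib]
    congr 1
    rw [Finset.prod_univ_sum]
    rw [Fintype.piFinset_univ]
  rw [Finset.sum_congr rfl hstep]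
  -- now both sides are finite double sums; compare termwise
  rw [Finset.mul_sum]
  have lhs_eq : ∀ l ∈ Finset.range (n+1),
      (1 + (q:ℂ))^r * (K l * ((∑ a : Fin r → Fin f, ∏ j, (-1:ℂ)^((a j : ℕ))
          * χ (((a j : ℕ)) : ZMod f) * (q:ℂ)^(d j l * (a j : ℕ)))
        / ∏ j : Fin r, (1 + (q:ℂ)^(d j l * f))))
      = ∑ a : Fin r → Fin f, (1 + (q:ℂ))^r * (K l * ((∏ j, (-1:ℂ)^((a j : ℕ))
          * χ (((a j : ℕ)) : ZMod f) * (q:ℂ)^(d j l * (a j : ℕ)))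
        / ∏ j : Fin r, (1 + (q:ℂ)^(d j l * f)))) := by
    intro l _
    rw [Finset.sum_div, Finset.mul_sum, Finset.mul_sum]
  rw [Finset.sum_congr rfl lhs_eq, Finset.sum_comm, Finset.mul_sum]
  refine Finset.sum_congr rfl fun a _ => ?_
  rw [Finset.mul_sum, Finset.mul_sum]
  refine Finset.sum_congr rfl fun l hl => ?_
  -- termwise equality
  have hcast2 : ((q ^ (∑ j : Fin r, (h - ((j : ℤ) + 1) + l + 1) * ((a j : ℕ) : ℤ)) : ℝ) : ℂ)
      = (q:ℂ)^(∑ j, d j l * (a j : ℕ)) := by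
    have he : (∑ j : Fin r, (h - ((j : ℤ) + 1) + l + 1) * ((a j : ℕ) : ℤ))
        = ((∑ j, d j l * (a j : ℕ) : ℕ) : ℤ) := by
      push_cast
      refine Finset.sum_congr rfl fun j _ => ?_
      have := hdz j l
      rw [← this]
    rw [he, zpow_natCast]
    push_cast
    ring
  have hcast3 : ∀ j : Fin r, ((q ^ ((h - ((j : ℤ) + 1) + l + 1) * f) : ℝ) : ℂ)
      = (q:ℂ)^(d j l * f) := by
    intro j
    have he : (h - ((j : ℤ) + 1) + l + 1) * (f:ℤ) = ((d j l * f : ℕ) : ℤ) := by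
      push_cast
      rw [hdz j l]
    rw [he, zpow_natCast]
    push_cast
    ring
  have hprodB : ∏ j, (-1:ℂ)^((a j : ℕ)) * χ (((a j : ℕ)) : ZMod f)
      * (q:ℂ)^(d j l * (a j : ℕ))
      = (-1:ℂ)^(∑ j, (a j : ℕ)) * (∏ j, χ (((a j : ℕ)) : ZMod f))
        * (q:ℂ)^(∑ j, d j l * (a j : ℕ)) := by
    rw [Finset.prod_mul_distrib, Finset.prod_mul_distrib]
    rw [Finset.prod_pow_eq_pow_sum, Finset.prod_pow_eq_pow_sum]
  have hD : (∏ j : Fin r, (1 + ((q ^ ((h - ((j : ℤ) + 1) + l + 1) * f) : ℝ) : ℂ)))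
      = ∏ j : Fin r, (1 + (q:ℂ)^(d j l * f)) :=
    Finset.prod_congr rfl fun j _ => by rw [hcast3 j]
  rw [hcast2, hD, hprodB, hK]
  ring
end

section
/- Let r ≥ 1 and n ≥ 0 be integers, let q be a real number with 0 < q < 1, let x > 0 be real, let a_1, …, a_r be positive real numbers, and let b_1, …, b_r be nonnegative integers. Then the series [2]_q^r · Σ_{(m_1,…,m_r) ∈ ℕ^r} (-1)^{m_1+⋯+m_r} q^{Σ_{i=1}^r (b_i+1) m_i} [a_1 m_1 + ⋯ + a_r m_r + x]_q^n converges absolutely and equals ([2]_q^r/(1-q)^n) · Σ_{l=0}^{n} C(n,l) (-1)^l q^{l x} / ∏_{i=1}^{r} (1+q^{l a_i + b_i + 1}). -/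
lemma pi_summable_tsum {r : ℕ} (f : Fin r → ℕ → ℝ)
    (hf : ∀ i, Summable fun k => ‖f i k‖) :
    Summable (fun m : Fin r → ℕ => ‖∏ i, f i (m i)‖) ∧
    (∑' m : Fin r → ℕ, ∏ i, f i (m i)) = ∏ i, ∑' k, f i k := by
  induction r with
  | zero =>
    refine ⟨Summable.of_finite, ?_⟩
    rw [tsum_eq_single (fun i => i.elim0) (by
      intro m hm; exact absurd (Subsingleton.elim m _) hm)]
    simp
  | succ r ih =>
    obtain ⟨ihs, iht⟩ := ih (fun i => f i.succ) (fun i => hf i.succ)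
    set e : ℕ × (Fin r → ℕ) ≃ (Fin (r+1) → ℕ) := Fin.consEquiv fun _ => ℕ with he
    have hcomp : ∀ p : ℕ × (Fin r → ℕ),
        (∏ i, f i (e p i)) = f 0 p.1 * ∏ i : Fin r, f i.succ (p.2 i) := by
      intro p
      rw [Fin.prod_univ_succ]
      simp [he, Fin.consEquiv]
    have hs2 : Summable (fun p : ℕ × (Fin r → ℕ) =>
        ‖f 0 p.1 * ∏ i : Fin r, f i.succ (p.2 i)‖) :=
      Summable.mul_norm (f := f 0)
        (g := fun m : Fin r → ℕ => ∏ i : Fin r, f i.succ (m i)) (hf 0) ihs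
    constructor
    · rw [← e.summable_iff]
      exact hs2.congr fun p => by rw [Function.comp_apply, hcomp]
    · rw [← e.tsum_eq]
      calc (∑' p : ℕ × (Fin r → ℕ), ∏ i, f i (e p i))
          = ∑' p : ℕ × (Fin r → ℕ), f 0 p.1 * ∏ i : Fin r, f i.succ (p.2 i) :=
            tsum_congr hcomp
        _ = (∑' k, f 0 k) * ∑' m : Fin r → ℕ, ∏ i : Fin r, f i.succ (m i) :=
            (tsum_mul_tsum_of_summable_norm (hf 0) ihs).symm
        _ = ∏ i, ∑' k, f i k := by rw [iht, Fin.prod_univ_succ]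

lemma key_pointwise (r n : ℕ) (q : ℝ) (hq0 : 0 < q) (x : ℝ)
    (a : Fin r → ℝ) (b : Fin r → ℕ) (m : Fin r → ℕ) :
    (-1 : ℝ) ^ (∑ i, m i) * q ^ (∑ i, (b i + 1) * m i) *
        qnum q ((∑ i, a i * m i) + x) ^ n
    = ∑ l ∈ Finset.range (n + 1),
        ((n.choose l : ℝ) * (-1) ^ l * q ^ ((l : ℝ) * x) / (1 - q) ^ n) *
          ∏ i : Fin r, (-(q ^ ((l : ℝ) * a i + (b i : ℝ) + 1))) ^ (m i) := by
  have hyl : ∀ l : ℕ, (-(q ^ ((∑ i, a i * m i) + x))) ^ l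
      = (-1 : ℝ) ^ l * q ^ ((l : ℝ) * x) * ∏ i, (q ^ ((l : ℝ) * a i)) ^ (m i) := by
    intro l
    rw [neg_pow, ← Real.rpow_natCast (q ^ _) l, ← Real.rpow_mul hq0.le, add_mul,
      Real.rpow_add hq0, mul_assoc]
    congr 1
    rw [mul_comm]
    congr 1
    · rw [mul_comm]
    · rw [Finset.sum_mul]
      have : ∀ i : Fin r, a i * (m i : ℝ) * (l : ℝ) = ((l : ℝ) * a i) * (m i : ℝ) := by
        intro i; ring
      simp_rw [this]
      rw [Real.rpow_sum_of_pos hq0]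
      refine Finset.prod_congr rfl fun i _ => ?_
      rw [Real.rpow_mul hq0.le, Real.rpow_natCast]
  have hsgn : ((-1 : ℝ)) ^ (∑ i, m i) * q ^ (∑ i, (b i + 1) * m i)
      = ∏ i, ((-1 : ℝ) * q ^ ((b i : ℝ) + 1)) ^ (m i) := by
    rw [← Finset.prod_pow_eq_pow_sum, ← Finset.prod_pow_eq_pow_sum,
      ← Finset.prod_mul_distrib]
    refine Finset.prod_congr rfl fun i _ => ?_
    rw [mul_pow]
    congr 1
    rw [pow_mul]
    congr 1
    rw [← Real.rpow_natCast q (b i + 1)]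
    congr 1
    push_cast
    ring
  have hprod : ∀ l : ℕ,
      (∏ i, ((-1 : ℝ) * q ^ ((b i : ℝ) + 1)) ^ (m i)) *
        ∏ i, (q ^ ((l : ℝ) * a i)) ^ (m i)
      = ∏ i : Fin r, (-(q ^ ((l : ℝ) * a i + (b i : ℝ) + 1))) ^ (m i) := by
    intro l
    rw [← Finset.prod_mul_distrib]
    refine Finset.prod_congr rfl fun i _ => ?_
    rw [← mul_pow]
    congr 1
    simp only [Real.rpow_add hq0]
    ring
  unfold qnum
  rw [div_pow]
  rw [show (1 : ℝ) - q ^ ((∑ i, a i * m i) + x)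
      = -(q ^ ((∑ i, a i * m i) + x)) + 1 from (neg_add_eq_sub _ _).symm]
  rw [add_pow]
  simp only [one_pow, mul_one]
  rw [div_eq_mul_inv, Finset.sum_mul, Finset.mul_sum]
  refine Finset.sum_congr rfl fun l hl => ?_
  rw [hyl l, hsgn, ← hprod l, div_eq_mul_inv]
  ring

theorem stmt12 (r : ℕ) (hr : 1 ≤ r) (n : ℕ) (q : ℝ) (hq0 : 0 < q) (hq1 : q < 1)
    (x : ℝ) (hx : 0 < x) (a : Fin r → ℝ) (ha : ∀ i, 0 < a i) (b : Fin r → ℕ) :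
    Summable (fun m : Fin r → ℕ =>
      (-1 : ℝ) ^ (∑ i, m i) * q ^ (∑ i, (b i + 1) * m i) *
        qnum q ((∑ i, a i * m i) + x) ^ n) ∧
    (1 + q) ^ r * (∑' m : Fin r → ℕ,
        (-1 : ℝ) ^ (∑ i, m i) * q ^ (∑ i, (b i + 1) * m i) *
          qnum q ((∑ i, a i * m i) + x) ^ n)
      = ((1 + q) ^ r / (1 - q) ^ n) *
          ∑ l ∈ Finset.range (n + 1),
            (n.choose l : ℝ) * (-1) ^ l * q ^ ((l : ℝ) * x) /
              ∏ i : Fin r, (1 + q ^ ((l : ℝ) * a i + (b i : ℝ) + 1)) := by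
  -- the geometric ratios
  set u : ℕ → Fin r → ℝ := fun l i => -(q ^ ((l : ℝ) * a i + (b i : ℝ) + 1)) with hu
  have hnorm : ∀ l : ℕ, ∀ i : Fin r, ‖u l i‖ < 1 := by
    intro l i
    rw [hu]
    simp only [norm_neg, Real.norm_eq_abs,
      abs_of_pos (Real.rpow_pos_of_pos hq0 _)]
    refine Real.rpow_lt_one hq0.le hq1 ?_
    have h1 : (0 : ℝ) ≤ (l : ℝ) * a i := mul_nonneg (Nat.cast_nonneg l) (ha i).le
    have h2 : (0 : ℝ) ≤ (b i : ℝ) := Nat.cast_nonneg _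
    linarith
  have hgeo : ∀ l : ℕ, ∀ i : Fin r, Summable fun k : ℕ => ‖(u l i) ^ k‖ := by
    intro l i
    simp only [norm_pow]
    exact summable_geometric_of_lt_one (norm_nonneg _) (hnorm l i)
  have hpi : ∀ l : ℕ,
      Summable (fun m : Fin r → ℕ => ‖∏ i, (u l i) ^ (m i)‖) ∧
      (∑' m : Fin r → ℕ, ∏ i, (u l i) ^ (m i)) = ∏ i, ∑' k, (u l i) ^ k :=
    fun l => pi_summable_tsum (fun i k => (u l i) ^ k) (hgeo l)
  have htsum_geo : ∀ l : ℕ, ∀ i : Fin r,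
      (∑' k : ℕ, (u l i) ^ k) = (1 + q ^ ((l : ℝ) * a i + (b i : ℝ) + 1))⁻¹ := by
    intro l i
    rw [tsum_geometric_of_norm_lt_one (hnorm l i), hu, sub_neg_eq_add]
  -- summability of each term in the l-sum
  have hsuml : ∀ l : ℕ, Summable (fun m : Fin r → ℕ =>
      ((n.choose l : ℝ) * (-1) ^ l * q ^ ((l : ℝ) * x) / (1 - q) ^ n) *
        ∏ i : Fin r, (u l i) ^ (m i)) :=
    fun l => ((hpi l).1.of_norm).mul_left _
  have hkey : (fun m : Fin r → ℕ =>
      (-1 : ℝ) ^ (∑ i, m i) * q ^ (∑ i, (b i + 1) * m i) *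
        qnum q ((∑ i, a i * m i) + x) ^ n)
      = fun m : Fin r → ℕ => ∑ l ∈ Finset.range (n + 1),
          ((n.choose l : ℝ) * (-1) ^ l * q ^ ((l : ℝ) * x) / (1 - q) ^ n) *
            ∏ i : Fin r, (u l i) ^ (m i) :=
    funext fun m => key_pointwise r n q hq0 x a b m
  have hsummable : Summable (fun m : Fin r → ℕ =>
      (-1 : ℝ) ^ (∑ i, m i) * q ^ (∑ i, (b i + 1) * m i) *
        qnum q ((∑ i, a i * m i) + x) ^ n) := by
    rw [hkey]
    exact summable_sum fun l _ => hsuml l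
  refine ⟨hsummable, ?_⟩
  have htsum : (∑' m : Fin r → ℕ,
      (-1 : ℝ) ^ (∑ i, m i) * q ^ (∑ i, (b i + 1) * m i) *
        qnum q ((∑ i, a i * m i) + x) ^ n)
      = ∑ l ∈ Finset.range (n + 1),
          ((n.choose l : ℝ) * (-1) ^ l * q ^ ((l : ℝ) * x) / (1 - q) ^ n) *
            (∏ i : Fin r, (1 + q ^ ((l : ℝ) * a i + (b i : ℝ) + 1)))⁻¹ := by
    rw [hkey, Summable.tsum_finsetSum fun l _ => hsuml l]
    refine Finset.sum_congr rfl fun l _ => ?_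
    rw [tsum_mul_left, (hpi l).2]
    congr 1
    rw [← Finset.prod_inv_distrib]
    exact Finset.prod_congr rfl fun i _ => htsum_geo l i
  rw [htsum, Finset.mul_sum, Finset.mul_sum]
  refine Finset.sum_congr rfl fun l _ => ?_
  have hpos : (0 : ℝ) < ∏ i : Fin r, (1 + q ^ ((l : ℝ) * a i + (b i : ℝ) + 1)) :=
    Finset.prod_pos fun i _ => by positivity
  field_simp
end

section
/- Let q be a real number with 0 < q < 1, and for each integer n ≥ 0 define the n-th q-Euler number E_{n,q} := (1+q) · Σ_{m=0}^{∞} (-q)^m [m]_q^n (a convergent series). Then E_{0,q} = 1, and for every integer n ≥ 1 one has q · Σ_{l=0}^{n} C(n,l) q^l E_{l,q} + E_{n,q} = 0, where C(n,l) is the ordinary binomial coefficient. -/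
/-- The `n`-th `q`-Euler number `E_{n,q} = (1+q) · Σ_{m≥0} (-q)^m [m]_q^n`,
where `[m]_q = (1 - q^m)/(1 - q)` (with the convention `[0]_q^0 = 1`). -/
noncomputable def qEuler (q : ℝ) (n : ℕ) : ℝ :=
  (1 + q) * ∑' m : ℕ, (-q) ^ m * ((1 - q ^ m) / (1 - q)) ^ n

theorem stmt13 (q : ℝ) (hq0 : 0 < q) (hq1 : q < 1) :
    qEuler q 0 = 1 ∧
    ∀ n : ℕ, 1 ≤ n →
      q * (∑ l ∈ Finset.range (n + 1), (n.choose l : ℝ) * q ^ l * qEuler q l) +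
        qEuler q n = 0 := by
  have h1q : (0:ℝ) < 1 - q := by linarith
  have hqne : (1:ℝ) - q ≠ 0 := ne_of_gt h1q
  have h1pq : (0:ℝ) < 1 + q := by linarith
  set f : ℕ → ℕ → ℝ := fun n m => (-q) ^ m * ((1 - q ^ m) / (1 - q)) ^ n with hf
  have hnum : ∀ m : ℕ, (0:ℝ) ≤ (1 - q ^ m) / (1 - q) ∧ (1 - q ^ m) / (1 - q) ≤ 1 / (1 - q) := by
    intro m
    have hm0 : (0:ℝ) ≤ q ^ m := pow_nonneg hq0.le m
    have hm1 : q ^ m ≤ 1 := pow_le_one₀ hq0.le hq1.le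
    constructor
    · exact div_nonneg (by linarith) h1q.le
    · gcongr <;> linarith
  have hsum : ∀ n, Summable (f n) := by
    intro n
    apply Summable.of_norm
    have hgs : Summable (fun m : ℕ => q ^ m * (1 / (1 - q)) ^ n) :=
      (summable_geometric_of_lt_one hq0.le hq1).mul_right _
    apply Summable.of_nonneg_of_le (fun m => norm_nonneg _) _ hgs
    intro m
    rw [hf]
    simp only [norm_mul, norm_pow, norm_neg]
    have : ‖q‖ ^ m = q ^ m := by rw [Real.norm_of_nonneg hq0.le]
    rw [this]
    apply mul_le_mul_of_nonneg_left _ (pow_nonneg hq0.le m)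
    apply pow_le_pow_left₀ (norm_nonneg _)
    rw [Real.norm_of_nonneg (hnum m).1]
    exact (hnum m).2
  have hE0 : qEuler q 0 = 1 := by
    unfold qEuler
    have : (∑' m : ℕ, (-q) ^ m * ((1 - q ^ m) / (1 - q)) ^ 0) = ∑' m : ℕ, (-q) ^ m := by
      congr 1; ext m; simp
    rw [this, tsum_geometric_of_norm_lt_one (by rw [norm_neg, Real.norm_of_nonneg hq0.le]; exact hq1)]
    field_simp
    rw [sub_neg_eq_add, div_self h1pq.ne']
  refine ⟨hE0, ?_⟩
  intro n hn
  -- key algebraic identity: [m+1]_q = 1 + q [m]_q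
  have hstep : ∀ m : ℕ, (1 - q ^ (m+1)) / (1 - q) = q * ((1 - q ^ m) / (1 - q)) + 1 := by
    intro m
    field_simp
    ring
  -- sum over l of binomial * q^l * f l m = f-shifted
  have hinner : ∀ m : ℕ,
      (∑ l ∈ Finset.range (n + 1), (n.choose l : ℝ) * q ^ l * f l m)
        = (-q) ^ m * ((1 - q ^ (m+1)) / (1 - q)) ^ n := by
    intro m
    rw [hstep m, add_pow]
    rw [Finset.mul_sum]
    apply Finset.sum_congr rfl
    intro l _
    simp only [hf, mul_pow, one_pow, mul_one]
    ring
  have hS : Summable (fun m : ℕ => (-q) ^ m * ((1 - q ^ (m+1)) / (1 - q)) ^ n) := by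
    apply Summable.of_norm
    have hgs : Summable (fun m : ℕ => q ^ m * (1 / (1 - q)) ^ n) :=
      (summable_geometric_of_lt_one hq0.le hq1).mul_right _
    apply Summable.of_nonneg_of_le (fun m => norm_nonneg _) _ hgs
    intro m
    simp only [norm_mul, norm_pow, norm_neg]
    have hq' : ‖q‖ ^ m = q ^ m := by rw [Real.norm_of_nonneg hq0.le]
    rw [hq']
    apply mul_le_mul_of_nonneg_left _ (pow_nonneg hq0.le m)
    apply pow_le_pow_left₀ (norm_nonneg _)
    rw [Real.norm_of_nonneg (hnum (m+1)).1]
    exact (hnum (m+1)).2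
  have hsumE : ∑ l ∈ Finset.range (n+1), (n.choose l : ℝ) * q ^ l * qEuler q l
      = (1+q) * ∑' m : ℕ, (-q) ^ m * ((1 - q ^ (m+1)) / (1 - q)) ^ n := by
    have hterm : ∀ l, (n.choose l : ℝ) * q ^ l * qEuler q l
        = (1+q) * ∑' m : ℕ, (n.choose l : ℝ) * q ^ l * f l m := by
      intro l
      unfold qEuler
      rw [tsum_mul_left]
      ring
    simp_rw [hterm]
    rw [← Finset.mul_sum, ← Summable.tsum_finsetSum (fun l _ => (hsum l).mul_left _)]
    congr 1
    exact tsum_congr hinner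
  have hEn : qEuler q n
      = (1+q) * ((-q) * ∑' m : ℕ, (-q) ^ m * ((1 - q ^ (m+1)) / (1 - q)) ^ n) := by
    unfold qEuler
    congr 1
    rw [Summable.tsum_eq_zero_add (hsum n)]
    have h0 : f n 0 = 0 := by
      simp [hf, zero_pow (by omega : n ≠ 0)]
    rw [h0, zero_add, ← tsum_mul_left]
    apply tsum_congr
    intro m
    simp only [hf, pow_succ]
    ring
  rw [hsumE, hEn]
  ring
end

section
/- Let f be an odd positive integer, let χ be a Dirichlet character modulo f with values in ℂ (extended to ℕ by χ(m) := χ(m mod f)), let n ≥ 0 be an integer, let q be a real number with 0 < q < 1, and let x > 0 be real. Then [2]_q · Σ_{m=0}^{∞} (-q)^m χ(m) [m+x]_q^n = ([2]_q/(1-q)^n) · Σ_{l=0}^{n} C(n,l) (-1)^l q^{l x} · ( Σ_{a=0}^{f-1} χ(a) (-q^{l+1})^a ) / (1+q^{(l+1) f}). -/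
lemma periodic_summable (f : ℕ) (hf0 : 0 < f) (c : ℕ → ℂ)
    (hc : ∀ m, c (m + f) = c m) (z : ℂ) (hz : ‖z‖ < 1) :
    Summable (fun m : ℕ => c m * z ^ m) := by
  have helper : ∀ j a : ℕ, c (j * f + a) = c a := by
    intro j
    induction j with
    | zero => simp
    | succ j ih =>
      intro a
      have : (j + 1) * f + a = (j * f + a) + f := by ring
      rw [this, hc, ih]
  have hmod : ∀ m : ℕ, c m = c (m % f) := by
    intro m
    conv_lhs => rw [← Nat.div_add_mod' m f]
    exact helper _ _
  set M : ℝ := ∑ a ∈ Finset.range f, ‖c a‖ with hM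
  have hbound : ∀ m : ℕ, ‖c m‖ ≤ M := by
    intro m
    rw [hmod m]
    exact Finset.single_le_sum (f := fun a => ‖c a‖) (fun i _ => norm_nonneg _)
      (Finset.mem_range.mpr (Nat.mod_lt m hf0))
  apply Summable.of_norm_bounded
    ((summable_geometric_of_lt_one (norm_nonneg z) hz).mul_left M)
  intro m
  rw [norm_mul, norm_pow]
  gcongr
  exact hbound m

set_option maxHeartbeats 1000000 in
lemma periodic_tsum (f : ℕ) (hf0 : 0 < f) (c : ℕ → ℂ)
    (hc : ∀ m, c (m + f) = c m) (z : ℂ) (hz : ‖z‖ < 1) :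
    ∑' m : ℕ, c m * z ^ m
      = (∑ a ∈ Finset.range f, c a * z ^ a) * (1 - z ^ f)⁻¹ := by
  have helper : ∀ j a : ℕ, c (j * f + a) = c a := by
    intro j
    induction j with
    | zero => simp
    | succ j ih =>
      intro a
      have : (j + 1) * f + a = (j * f + a) + f := by ring
      rw [this, hc, ih]
  have hsum := periodic_summable f hf0 c hc z hz
  haveI : NeZero f := ⟨hf0.ne'⟩
  set g : ℕ → ℂ := fun m => c m * z ^ m with hg
  have h1 : ∑' m : ℕ, g m = ∑' p : ℕ × Fin f, g ((Nat.divModEquiv f).symm p) :=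
    ((Nat.divModEquiv f).symm.tsum_eq g).symm
  have hsum' : Summable (fun p : ℕ × Fin f => g ((Nat.divModEquiv f).symm p)) :=
    ((Nat.divModEquiv f).symm.summable_iff).mpr hsum
  have h2 : ∑' p : ℕ × Fin f, g ((Nat.divModEquiv f).symm p)
      = ∑' j : ℕ, ∑' a : Fin f, g ((Nat.divModEquiv f).symm (j, a)) :=
    Summable.tsum_prod' hsum' (fun j => (hsum'.comp_injective (Prod.mk_right_injective j)))
  have hval : ∀ (j : ℕ) (a : Fin f),
      g ((Nat.divModEquiv f).symm (j, a)) = (z ^ f) ^ j * (c a * z ^ (a : ℕ)) := by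
    intro j a
    simp only [Nat.divModEquiv, Equiv.coe_fn_symm_mk, hg]
    rw [helper, pow_add, pow_mul]
    ring
  rw [h1, h2]
  have hzf : ‖z ^ f‖ < 1 := by
    rw [norm_pow]
    exact pow_lt_one₀ (norm_nonneg z) hz hf0.ne'
  calc ∑' j : ℕ, ∑' a : Fin f, g ((Nat.divModEquiv f).symm (j, a))
      = ∑' j : ℕ, (z ^ f) ^ j * (∑ a : Fin f, c a * z ^ (a : ℕ)) := by
        congr 1; funext j
        rw [tsum_fintype]
        simp only [hval]
        rw [Finset.mul_sum]
    _ = (∑' j : ℕ, (z ^ f) ^ j) * (∑ a : Fin f, c a * z ^ (a : ℕ)) := tsum_mul_right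
    _ = (∑ a ∈ Finset.range f, c a * z ^ a) * (1 - z ^ f)⁻¹ := by
        rw [tsum_geometric_of_norm_lt_one hzf, Fin.sum_univ_eq_sum_range (fun a => c a * z ^ a)]
        ring




set_option maxHeartbeats 1000000 in
theorem stmt14 (f : ℕ) (hf0 : 0 < f) (hf : Odd f) (χ : DirichletCharacter ℂ f)
    (n : ℕ) (q : ℝ) (hq0 : 0 < q) (hq1 : q < 1) (x : ℝ) (hx : 0 < x) :
    (1 + (q : ℂ)) * ∑' m : ℕ, (-(q : ℂ)) ^ m * χ (m : ZMod f) *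
        ((qnum q ((m : ℝ) + x) ^ n : ℝ) : ℂ)
      = ((1 + (q : ℂ)) / (1 - (q : ℂ)) ^ n) *
          ∑ l ∈ Finset.range (n + 1),
            (n.choose l : ℂ) * (-1) ^ l * ((q ^ ((l : ℝ) * x) : ℝ) : ℂ) *
              (∑ a ∈ Finset.range f, χ (a : ZMod f) * (-(q : ℂ) ^ (l + 1)) ^ a) /
                (1 + (q : ℂ) ^ ((l + 1) * f)) := by
  have hQ : ∀ m l : ℕ, (q ^ ((m : ℝ) + x)) ^ l = q ^ ((l : ℝ) * x) * (q ^ l) ^ m := by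
    intro m l
    rw [← Real.rpow_natCast (q ^ ((m : ℝ) + x)) l, ← Real.rpow_mul hq0.le]
    have h : ((m : ℝ) + x) * l = (l : ℝ) * x + ((l * m : ℕ) : ℝ) := by push_cast; ring
    rw [h, Real.rpow_add hq0, Real.rpow_natCast, pow_mul]
  have hqnum : ∀ m : ℕ, qnum q ((m : ℝ) + x) ^ n
      = (∑ l ∈ Finset.range (n + 1),
          (n.choose l : ℝ) * (-1) ^ l * q ^ ((l : ℝ) * x) * (q ^ l) ^ m) / (1 - q) ^ n := by
    intro m
    rw [qnum, div_pow]
    congr 1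
    rw [sub_eq_add_neg, add_comm, add_pow]
    refine Finset.sum_congr rfl fun l _ => ?_
    rw [one_pow, mul_one, neg_pow, hQ m l]
    ring
  -- the geometric ratio for each l
  set z : ℕ → ℂ := fun l => -(q : ℂ) ^ (l + 1) with hz
  have hznorm : ∀ l : ℕ, ‖z l‖ < 1 := by
    intro l
    rw [hz]
    simp only [norm_neg, norm_pow, Complex.norm_real, Real.norm_eq_abs, abs_of_pos hq0]
    exact pow_lt_one₀ hq0.le hq1 (Nat.succ_ne_zero l)
  have hper : ∀ m : ℕ, (fun m : ℕ => (χ (m : ZMod f) : ℂ)) (m + f)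
      = (fun m : ℕ => (χ (m : ZMod f) : ℂ)) m := by
    intro m
    simp [Nat.cast_add, ZMod.natCast_self]
  have hsum : ∀ l : ℕ, Summable (fun m : ℕ => (χ (m : ZMod f) : ℂ) * z l ^ m) :=
    fun l => periodic_summable f hf0 _ hper (z l) (hznorm l)
  -- per-term expansion
  set A : ℕ → ℂ := fun l =>
    (n.choose l : ℂ) * (-1) ^ l * ((q ^ ((l : ℝ) * x) : ℝ) : ℂ) / (1 - (q : ℂ)) ^ n with hA
  have hterm : ∀ m : ℕ, (-(q : ℂ)) ^ m * χ (m : ZMod f) * ((qnum q ((m : ℝ) + x) ^ n : ℝ) : ℂ)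
      = ∑ l ∈ Finset.range (n + 1), A l * ((χ (m : ZMod f) : ℂ) * z l ^ m) := by
    intro m
    rw [hqnum m]
    push_cast
    rw [Finset.sum_div, Finset.mul_sum]
    refine Finset.sum_congr rfl fun l _ => ?_
    rw [hA, hz]
    have hzz : (-(q : ℂ) ^ (l + 1)) ^ m = (-(q : ℂ)) ^ m * ((q : ℂ) ^ l) ^ m := by
      rw [show (-(q : ℂ) ^ (l + 1)) = (-(q : ℂ)) * (q : ℂ) ^ l by ring, mul_pow]
    simp only [hzz]
    ring
  rw [tsum_congr hterm, Summable.tsum_finsetSum (fun l _ => (hsum l).mul_left (A l))]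
  have htsum : ∀ l : ℕ, ∑' m : ℕ, (χ (m : ZMod f) : ℂ) * z l ^ m
      = (∑ a ∈ Finset.range f, (χ (a : ZMod f) : ℂ) * z l ^ a) * (1 - z l ^ f)⁻¹ :=
    fun l => periodic_tsum f hf0 _ hper (z l) (hznorm l)
  have hzf : ∀ l : ℕ, (1 : ℂ) - z l ^ f = 1 + (q : ℂ) ^ ((l + 1) * f) := by
    intro l
    rw [hz]
    simp only [hf.neg_pow, ← pow_mul]
    ring
  rw [Finset.mul_sum, Finset.mul_sum]
  refine Finset.sum_congr rfl fun l _ => ?_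
  rw [tsum_mul_left, htsum l, hzf l, hA]
  ring
end

section
/- Let f be an odd positive integer, let χ be a Dirichlet character modulo f with values in ℂ (extended to ℕ by χ(m) := χ(m mod f)), let r ≥ 1 be an integer, let q be a real number with 0 < q < 1, let x > 0 be real, and let s ∈ ℂ with Re(s) > 0. Then ∫_0^∞ t^{s-1} · ( Σ_{(m_1,…,m_r) ∈ ℕ^r} (-q)^{m_1+⋯+m_r} (∏_{i=1}^r χ(m_i)) e^{-[m_1+⋯+m_r+x]_q · t} ) dt = Γ(s) · Σ_{(m_1,…,m_r) ∈ ℕ^r} (-q)^{m_1+⋯+m_r} (∏_{i=1}^r χ(m_i)) [m_1+⋯+m_r+x]_q^{-s}, where t^{s-1} = exp((s-1)·log t) for t > 0 and Γ is the complex Gamma function. -/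
lemma summable_q_pow {q : ℝ} (hq0 : 0 ≤ q) (hq1 : q < 1) (r : ℕ) :
    Summable (fun m : Fin r → ℕ ↦ q ^ (∑ i, m i : ℕ)) := by
  induction r with
  | zero => exact summable_of_finite_support (Set.toFinite _)
  | succ n ih =>
      have h := ((summable_geometric_of_lt_one hq0 hq1).mul_of_nonneg ih
        (fun k ↦ pow_nonneg hq0 k) (fun m ↦ pow_nonneg hq0 _))
      refine ((Fin.consEquiv fun _ : Fin (n+1) ↦ ℕ).summable_iff).mp ?_
      convert h using 1
      ext ⟨k, m⟩
      simp [Fin.consEquiv, Fin.sum_univ_succ, pow_add]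

open Set MeasureTheory Complex Real

theorem stmt15 (f : ℕ) (hf0 : 0 < f) (hf : Odd f) (χ : DirichletCharacter ℂ f)
    (r : ℕ) (hr : 1 ≤ r) (q : ℝ) (hq0 : 0 < q) (hq1 : q < 1)
    (x : ℝ) (hx : 0 < x) (s : ℂ) (hs : 0 < s.re) :
    (∫ t in Set.Ioi (0 : ℝ), (t : ℂ) ^ (s - 1) *
        ∑' m : Fin r → ℕ, (-(q : ℂ)) ^ (∑ i, m i) * (∏ i, χ ((m i : ℕ) : ZMod f)) *
          Complex.exp (-((qnum q (((∑ i, m i : ℕ) : ℝ) + x) * t : ℝ) : ℂ)))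
      = Complex.Gamma s *
          ∑' m : Fin r → ℕ, (-(q : ℂ)) ^ (∑ i, m i) * (∏ i, χ ((m i : ℕ) : ZMod f)) *
            ((qnum q (((∑ i, m i : ℕ) : ℝ) + x) : ℝ) : ℂ) ^ (-s) := by
  set a : (Fin r → ℕ) → ℂ := fun m ↦ (-(q : ℂ)) ^ (∑ i, m i) * (∏ i, χ ((m i : ℕ) : ZMod f))
    with ha_def
  set p : (Fin r → ℕ) → ℝ := fun m ↦ qnum q (((∑ i, m i : ℕ) : ℝ) + x) with hp_def
  have h1q : (0:ℝ) < 1 - q := by linarith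
  have hqy : ∀ y : ℝ, 0 < y → 0 < qnum q y := fun y hy ↦
    div_pos (by linarith [Real.rpow_lt_one hq0.le hq1 hy]) h1q
  have hp0 : ∀ m, 0 < p m := fun m ↦ hqy _ (by positivity)
  have hpx : ∀ m, qnum q x ≤ p m := by
    intro m
    have h2 : q ^ (((∑ i, m i : ℕ) : ℝ) + x) ≤ q ^ x :=
      Real.rpow_le_rpow_of_exponent_ge hq0 hq1.le
        (by linarith [Nat.cast_nonneg (α := ℝ) (∑ i, m i)])
    simp only [hp_def, qnum]
    gcongr
  have hanorm : ∀ m, ‖a m‖ ≤ q ^ (∑ i, m i : ℕ) := by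
    intro m
    rw [ha_def]
    simp only
    rw [norm_mul, norm_pow, norm_neg, Complex.norm_real, Real.norm_eq_abs, abs_of_pos hq0]
    have h1 : ‖∏ i, χ ((m i : ℕ) : ZMod f)‖ ≤ 1 := by
      rw [norm_prod]
      refine Finset.prod_le_one (fun _ _ ↦ norm_nonneg _) (fun i _ ↦ ?_)
      exact DirichletCharacter.norm_le_one χ _
    nlinarith [pow_nonneg hq0.le (∑ i, m i), norm_nonneg (∏ i, χ ((m i : ℕ) : ZMod f))]
  have hsq : Summable (fun m : Fin r → ℕ ↦ q ^ (∑ i, m i : ℕ)) :=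
    summable_q_pow hq0.le hq1 r
  have h_sum : Summable fun m : Fin r → ℕ ↦ ‖a m‖ / (p m) ^ s.re := by
    refine Summable.of_nonneg_of_le
      (fun m ↦ div_nonneg (norm_nonneg _) (Real.rpow_pos_of_pos (hp0 m) _).le)
      (fun m ↦ ?_) (hsq.mul_right ((qnum q x) ^ s.re)⁻¹)
    rw [div_eq_mul_inv]
    refine mul_le_mul (hanorm m) ?_
      (inv_nonneg.mpr (Real.rpow_pos_of_pos (hp0 m) _).le) (pow_nonneg hq0.le _)
    rw [inv_le_inv₀ (Real.rpow_pos_of_pos (hp0 m) _) (Real.rpow_pos_of_pos (hqy x hx) _)]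
    exact Real.rpow_le_rpow (hqy x hx).le (hpx m) hs.le
  have hF : ∀ t ∈ Ioi (0:ℝ), HasSum (fun m : Fin r → ℕ ↦ a m * Real.exp (-p m * t))
      (∑' m : Fin r → ℕ, a m * Complex.exp (-((p m * t : ℝ) : ℂ))) := by
    intro t ht
    have ht' : 0 < t := mem_Ioi.mp ht
    have e : (fun m : Fin r → ℕ ↦ a m * (Real.exp (-p m * t) : ℂ))
        = fun m : Fin r → ℕ ↦ a m * Complex.exp (-((p m * t : ℝ) : ℂ)) := by
      funext m
      rw [Complex.ofReal_exp]
      push_cast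
      ring_nf
    have hsummable : Summable fun m : Fin r → ℕ ↦ a m * (Real.exp (-p m * t) : ℂ) := by
      refine Summable.of_norm (Summable.of_nonneg_of_le (fun m ↦ by positivity)
        (fun m ↦ ?_) hsq)
      rw [norm_mul]
      have h2 : ‖(Real.exp (-p m * t) : ℂ)‖ ≤ 1 := by
        rw [Complex.norm_real, Real.norm_eq_abs, Real.abs_exp]
        exact Real.exp_le_one_iff.mpr (by nlinarith [hp0 m])
      nlinarith [hanorm m, norm_nonneg (a m), norm_nonneg ((Real.exp (-p m * t) : ℂ)),
        pow_nonneg hq0.le (∑ i, m i)]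
    rw [show (∑' m : Fin r → ℕ, a m * Complex.exp (-((p m * t : ℝ) : ℂ)))
        = ∑' m : Fin r → ℕ, a m * (Real.exp (-p m * t) : ℂ) by rw [e]]
    exact hsummable.hasSum
  have key := hasSum_mellin (fun m ↦ Or.inr (hp0 m)) hs hF h_sum
  have hmel : mellin (fun t : ℝ ↦ ∑' m : Fin r → ℕ, a m * Complex.exp (-((p m * t : ℝ) : ℂ))) s
      = ∫ t in Set.Ioi (0:ℝ), (t : ℂ) ^ (s - 1) *
          ∑' m : Fin r → ℕ, a m * Complex.exp (-((p m * t : ℝ) : ℂ)) := by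
    simp [mellin, smul_eq_mul]
  rw [hmel] at key
  rw [← key.tsum_eq, ← tsum_mul_left]
  refine tsum_congr fun m ↦ ?_
  rw [cpow_neg]
  ring
end
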